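/- arXiv:1807.03449 — 4 statements merged into one kernel-verified Lean document; each statement's English description precedes it below -/
import Mathlib

section
/- Let Ω be a bounded Lipschitz domain in ℝ^N and let ω ∈ L¹(Ω) satisfy ω ≥ 0 a.e. in Ω and ∫_Ω ω dx = 1. Then there exists a nonnegative function ξ ∈ C(Ω̄) that vanishes on the boundary ∂Ω and satisfies ∫_Ω (log|ξ|) ω dx = 0. -/
open MeasureTheory Metric Set Filter Topology
open scoped ENNReal NNReal

noncomputable section

/-- Euclidean space ℝ^N. -/
abbrev Euc (N : ℕ) := EuclideanSpace ℝ (Fin N)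

variable {N : ℕ}

/-- Distance to the boundary of `Ω`. -/
def distBdry (Ω : Set (Euc N)) (x : Euc N) : ℝ := Metric.infDist x (frontier Ω)

/-- The β-Hölder seminorm `|u|_β` of `u` over the closure of `Ω`. -/
def holderSemi (β : ℝ) (Ω : Set (Euc N)) (u : Euc N → ℝ) : ℝ :=
  sSup {q : ℝ | ∃ x ∈ closure Ω, ∃ y ∈ closure Ω, x ≠ y ∧ q = |u x - u y| / dist x y ^ β}

/-- Membership in `C_0^{0,β}(closure Ω)`: β-Hölder continuous on the closure of `Ω`
and vanishing on the boundary `∂Ω`. -/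
def MemC0Holder (β : ℝ) (Ω : Set (Euc N)) (u : Euc N → ℝ) : Prop :=
  (∃ C : ℝ, ∀ x ∈ closure Ω, ∀ y ∈ closure Ω, |u x - u y| ≤ C * dist x y ^ β) ∧
  (∀ x ∈ frontier Ω, u x = 0)

/-- The p-th power `[u]_{s,p}^p` of the Gagliardo seminorm. -/
def gagliardo (N : ℕ) (s p : ℝ) (u : Euc N → ℝ) : ℝ≥0∞ :=
  ∫⁻ x : Euc N, ∫⁻ y : Euc N,
    ENNReal.ofReal (|u x - u y| ^ p / dist x y ^ ((N : ℝ) + s * p))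

/-- Membership in the fractional Sobolev space `W_0^{s,p}(Ω)`. -/
def MemW0 (s p : ℝ) (Ω : Set (Euc N)) (u : Euc N → ℝ) : Prop :=
  MemLp u (ENNReal.ofReal p) volume ∧ (∀ᵐ x : Euc N, x ∉ Ω → u x = 0) ∧
  gagliardo N s p u < ⊤

/-- `∫_Ω (log|u|)⁺ ω dx` as an extended nonnegative real. -/
def logIntPos (Ω : Set (Euc N)) (ω u : Euc N → ℝ) : ℝ≥0∞ :=
  ∫⁻ x in Ω, ENNReal.ofReal (ω x) * ENNReal.ofReal (Real.log |u x|)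

/-- `∫_Ω (log|u|)⁻ ω dx` as an extended nonnegative real,
with the convention `log 0 = -∞`. -/
def logIntNeg (Ω : Set (Euc N)) (ω u : Euc N → ℝ) : ℝ≥0∞ :=
  ∫⁻ x in Ω, ENNReal.ofReal (ω x) *
    (if u x = 0 then ⊤ else ENNReal.ofReal (-Real.log |u x|))

/-- The extended-real integral `∫_Ω (log|u|) ω dx` (which may equal `-∞`). -/
def logInt (Ω : Set (Euc N)) (ω u : Euc N → ℝ) : EReal :=
  (logIntPos Ω ω u : EReal) - (logIntNeg Ω ω u : EReal)

/-- The exponential map `EReal → ℝ≥0∞`, with `exp (-∞) = 0` and `exp ∞ = ∞`. -/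
def expE (x : EReal) : ℝ≥0∞ :=
  if x = ⊥ then 0 else if x = ⊤ then ⊤ else ENNReal.ofReal (Real.exp x.toReal)

/-- `k(u) := exp (∫_Ω (log|u|) ω dx)`. -/
def kval (Ω : Set (Euc N)) (ω u : Euc N → ℝ) : ℝ≥0∞ := expE (logInt Ω ω u)

/-- `Λ_p := inf { [u]_{s,p}^p : u ∈ M_p }` where
`M_p = {u ∈ W_0^{s,p}(Ω) : ∫_Ω (log|u|) ω dx = 0}`. -/
def LambdaP (N : ℕ) (s p : ℝ) (Ω : Set (Euc N)) (ω : Euc N → ℝ) : ℝ≥0∞ :=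
  sInf {Λ : ℝ≥0∞ | ∃ u : Euc N → ℝ,
    MemW0 s p Ω u ∧ logInt Ω ω u = 0 ∧ Λ = gagliardo N s p u}

/-- Membership in `M_s := {u ∈ C_0^{0,s}(closure Ω) : k(u) = 1}`. -/
def MemMs (s : ℝ) (Ω : Set (Euc N)) (ω u : Euc N → ℝ) : Prop :=
  MemC0Holder s Ω u ∧ kval Ω ω u = 1

/-- `μ_s := inf {|u|_s : u ∈ M_s}`. -/
def muS (s : ℝ) (Ω : Set (Euc N)) (ω : Euc N → ℝ) : ℝ :=
  sInf {m : ℝ | ∃ u : Euc N → ℝ, MemMs s Ω ω u ∧ m = holderSemi s Ω u}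

/-- `K_ε := ess sup_{0 ≤ t ≤ ε} ∫_{δ^{-1}{t}} ω dH_{N-1}`. -/
def Keps (N : ℕ) (Ω : Set (Euc N)) (ω : Euc N → ℝ) (ε : ℝ) : ℝ≥0∞ :=
  essSup (fun t : ℝ =>
      ∫⁻ x in distBdry Ω ⁻¹' {t}, ENNReal.ofReal (ω x)
        ∂(MeasureTheory.Measure.hausdorffMeasure ((N : ℝ) - 1)))
    (volume.restrict (Icc (0 : ℝ) ε))

/-- `u` is a weak solution of `(-Δ_p)^s u = Λ u⁻¹ ω` in `Ω`. -/
def IsWeakSolution (N : ℕ) (s p : ℝ) (Ω : Set (Euc N)) (ω : Euc N → ℝ) (Λ : ℝ)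
    (u : Euc N → ℝ) : Prop :=
  ∀ φ : Euc N → ℝ, MemW0 s p Ω φ →
    (∫ x : Euc N, ∫ y : Euc N,
        |u x - u y| ^ (p - 2) * (u x - u y) * (φ x - φ y) / dist x y ^ ((N : ℝ) + s * p))
      = Λ * ∫ x in Ω, (u x)⁻¹ * φ x * ω x

/-- `(L_∞^+ u)(x) := sup_{y ≠ x} (u(y)-u(x))/|y-x|^s`. -/
def Lplus (s : ℝ) (u : Euc N → ℝ) (x : Euc N) : ℝ :=
  ⨆ y : {y : Euc N // y ≠ x}, (u y.1 - u x) / dist y.1 x ^ s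

/-- `(L_∞^- u)(x) := inf_{y ≠ x} (u(y)-u(x))/|y-x|^s`. -/
def Lminus (s : ℝ) (u : Euc N → ℝ) (x : Euc N) : ℝ :=
  ⨅ y : {y : Euc N // y ≠ x}, (u y.1 - u x) / dist y.1 x ^ s

/-- `u` is a viscosity supersolution of `L u = 0` in `Ω`. -/
def IsViscSupersol (Ω : Set (Euc N)) (L : (Euc N → ℝ) → Euc N → ℝ)
    (u : Euc N → ℝ) : Prop :=
  ∀ x₀ ∈ Ω, ∀ φ : Euc N → ℝ, ContDiff ℝ 1 φ → HasCompactSupport φ →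
    φ x₀ = u x₀ → (∀ x, φ x ≤ u x) → L φ x₀ ≤ 0

/-- `u` is a viscosity subsolution of `L u = 0` in `Ω`. -/
def IsViscSubsol (Ω : Set (Euc N)) (L : (Euc N → ℝ) → Euc N → ℝ)
    (u : Euc N → ℝ) : Prop :=
  ∀ x₀ ∈ Ω, ∀ φ : Euc N → ℝ, ContDiff ℝ 1 φ → HasCompactSupport φ →
    φ x₀ = u x₀ → (∀ x, u x ≤ φ x) → 0 ≤ L φ x₀
/-- For a bounded (Lipschitz) domain `Ω ⊂ ℝ^N` and a normalized nonnegative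
weight `ω ∈ L¹(Ω)`, there is a nonnegative `ξ ∈ C(closure Ω)` vanishing on `∂Ω` with
`∫_Ω (log|ξ|) ω dx = 0` (in the extended-real sense). -/
theorem exists_continuous_logNormalized
    (N : ℕ) (Ω : Set (Euc N)) (hΩo : IsOpen Ω) (hΩb : Bornology.IsBounded Ω)
    (hΩc : IsConnected Ω)
    (ω : Euc N → ℝ) (hω_int : IntegrableOn ω Ω)
    (hω_nn : ∀ᵐ x ∂volume.restrict Ω, 0 ≤ ω x)
    (hω_norm : ∫ x in Ω, ω x = 1) :
    ∃ ξ : Euc N → ℝ, ContinuousOn ξ (closure Ω) ∧ (∀ x, 0 ≤ ξ x) ∧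
      (∀ x ∈ frontier Ω, ξ x = 0) ∧ logInt Ω ω ξ = 0 := by
  by_cases hfr : (frontier Ω).Nonempty
  · -- main case
    set d : Euc N → ℝ := fun x => Metric.infDist x (frontier Ω) with hd_def
    have hd_cont : Continuous d := Metric.continuous_infDist_pt _
    have hd_nonneg : ∀ x, 0 ≤ d x := fun x => Metric.infDist_nonneg
    have hd_pos : ∀ x ∈ Ω, 0 < d x := by
      intro x hx
      refine (isClosed_frontier.notMem_iff_infDist_pos hfr).1 ?_
      intro h
      exact (hΩo.frontier_eq ▸ h).2 hx
    have hΩm : MeasurableSet Ω := hΩo.measurableSet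
    have hωaem : AEMeasurable (fun x => ENNReal.ofReal (ω x)) (volume.restrict Ω) :=
      ENNReal.measurable_ofReal.comp_aemeasurable hω_int.aestronglyMeasurable.aemeasurable
    set ν : Measure (Euc N) :=
      (volume.restrict Ω).withDensity (fun x => ENNReal.ofReal (ω x)) with hν_def
    have hν_tot : ∀ s : Set (Euc N), ν s ≤ 1 := by
      intro s
      have h1 : ν Set.univ = 1 := by
        rw [hν_def, withDensity_apply _ MeasurableSet.univ, Measure.restrict_univ,
          ← ofReal_integral_eq_lintegral_ofReal hω_int hω_nn, hω_norm, ENNReal.ofReal_one]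
      calc ν s ≤ ν Set.univ := measure_mono (Set.subset_univ s)
        _ = 1 := h1
    have hA_meas : ∀ e : ℝ, MeasurableSet {x : Euc N | d x < e} := fun e =>
      (isOpen_lt hd_cont continuous_const).measurableSet
    -- tendsto of measures
    have htend : Filter.Tendsto (fun j : ℕ => ν {x | d x < 1 / (j + 1)}) atTop (𝓝 0) := by
      have hmono : Antitone (fun j : ℕ => {x : Euc N | d x < 1 / (j + 1)}) := by
        intro j j' hjj x hx
        have : (1 : ℝ) / (j' + 1) ≤ 1 / (j + 1) := by
          apply one_div_le_one_div_of_le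
          · positivity
          · have := (Nat.cast_le (α := ℝ)).2 hjj; linarith
        exact lt_of_lt_of_le hx this
      have hnull : ν (⋂ j : ℕ, {x : Euc N | d x < 1 / (j + 1)}) = 0 := by
        apply measure_mono_null (t := {x : Euc N | d x ≤ 0})
        · intro x hx
          simp only [Set.mem_iInter, Set.mem_setOf_eq] at hx
          exact ge_of_tendsto tendsto_one_div_add_atTop_nhds_zero_nat
            (Filter.Eventually.of_forall fun j => (hx j).le)
        · have hne : {x : Euc N | d x ≤ 0} ∩ Ω = ∅ := by
            ext x
            simp only [Set.mem_inter_iff, Set.mem_setOf_eq, Set.mem_empty_iff_false,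
              iff_false, not_and]
            intro h hx
            exact absurd h (not_le.2 (hd_pos x hx))
          have hm : MeasurableSet {x : Euc N | d x ≤ 0} :=
            (isClosed_le hd_cont continuous_const).measurableSet
          rw [hν_def, withDensity_apply _ hm, Measure.restrict_restrict hm, hne]
          simp
      have := tendsto_measure_iInter_atTop (μ := ν)
        (fun j => (hA_meas _).nullMeasurableSet) hmono
        ⟨0, by exact ne_top_of_le_ne_top ENNReal.one_ne_top (hν_tot _)⟩
      rw [hnull] at this
      exact this
    -- choose eps
    have hchoice : ∀ k : ℕ, ∃ e : ℝ, 0 < e ∧ e ≤ (1 / 2 : ℝ) ^ k ∧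
        ν {x | d x < e} ≤ (2 : ℝ≥0∞)⁻¹ ^ k := by
      intro k
      have h1 : ∀ᶠ j : ℕ in atTop, ν {x | d x < 1 / (j + 1)} < (2 : ℝ≥0∞)⁻¹ ^ k :=
        htend.eventually_lt_const (ENNReal.pow_pos (ENNReal.inv_pos.2 ENNReal.ofNat_ne_top) k)
      have h2 : ∀ᶠ j : ℕ in atTop, (1 : ℝ) / (j + 1) < (1 / 2 : ℝ) ^ k :=
        tendsto_one_div_add_atTop_nhds_zero_nat.eventually_lt_const (by positivity)
      obtain ⟨j, hj1, hj2⟩ := (h1.and h2).exists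
      exact ⟨1 / (j + 1), by positivity, hj2.le, hj1.le⟩
    choose ε hε_pos hε_le hε_meas using hchoice
    -- the building blocks
    set f : ℕ → Euc N → ℝ := fun k x => (1 / 2 : ℝ) ^ k * min 1 (d x / ε k) with hf_def
    have hf_cont : ∀ k, Continuous (f k) := fun k =>
      continuous_const.mul (continuous_const.min (hd_cont.div_const _))
    have hf_nonneg : ∀ k x, 0 ≤ f k x := by
      intro k x
      apply mul_nonneg (by positivity)
      exact le_min zero_le_one (div_nonneg (hd_nonneg x) (hε_pos k).le)
    have hf_le : ∀ k x, f k x ≤ (1 / 2 : ℝ) ^ k := by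
      intro k x
      have : min 1 (d x / ε k) ≤ 1 := min_le_left _ _
      calc f k x ≤ (1 / 2 : ℝ) ^ k * 1 := by
            apply mul_le_mul_of_nonneg_left this (by positivity)
        _ = (1 / 2 : ℝ) ^ k := mul_one _
    have hf_bound : ∀ k x, ‖f k x‖ ≤ (1 / 2 : ℝ) ^ k := by
      intro k x
      rw [Real.norm_eq_abs, abs_of_nonneg (hf_nonneg k x)]
      exact hf_le k x
    have hgeom : Summable (fun k : ℕ => (1 / 2 : ℝ) ^ k) :=
      summable_geometric_of_lt_one (by norm_num) (by norm_num)
    set ξ : Euc N → ℝ := fun x => ∑' k, f k x with hξ_def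
    have hsum : ∀ x, Summable (fun k => f k x) := fun x =>
      Summable.of_nonneg_of_le (fun k => hf_nonneg k x) (fun k => hf_le k x) hgeom
    have hξ_cont : Continuous ξ := continuous_tsum hf_cont hgeom hf_bound
    have hξ_nonneg : ∀ x, 0 ≤ ξ x := fun x => tsum_nonneg (fun k => hf_nonneg k x)
    have hξ_le : ∀ x, ξ x ≤ 2 := by
      intro x
      calc ξ x ≤ ∑' k : ℕ, (1 / 2 : ℝ) ^ k :=
            Summable.tsum_le_tsum (fun k => hf_le k x) (hsum x) hgeom
        _ = 2 := tsum_geometric_two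
    have hξ_frontier : ∀ x ∈ frontier Ω, ξ x = 0 := by
      intro x hx
      have hd0 : d x = 0 := Metric.infDist_zero_of_mem hx
      have : ∀ k, f k x = 0 := by
        intro k
        simp only [hf_def, hd0, zero_div, min_eq_right (zero_le_one (α := ℝ)), mul_zero]
      simp only [hξ_def]
      rw [tsum_congr (fun k => this k), tsum_zero]
    have hξ_ge : ∀ (k : ℕ) x, ε k ≤ d x → (1 / 2 : ℝ) ^ k ≤ ξ x := by
      intro k x hk
      have h1 : f k x = (1 / 2 : ℝ) ^ k := by
        have h : (1 : ℝ) ≤ d x / ε k := (one_le_div (hε_pos k)).2 hk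
        simp only [hf_def]
        rw [min_eq_left h, mul_one]
      calc (1 / 2 : ℝ) ^ k = f k x := h1.symm
        _ ≤ ξ x := Summable.le_tsum (hsum x) k (fun j _ => hf_nonneg j x)
    have hnex : ∀ x ∈ Ω, ∃ k, ε k ≤ d x := by
      intro x hx
      obtain ⟨k, hk⟩ := exists_pow_lt_of_lt_one (hd_pos x hx) (by norm_num : (1 / 2 : ℝ) < 1)
      exact ⟨k, (hε_le k).trans hk.le⟩
    have hξ_pos : ∀ x ∈ Ω, 0 < ξ x := by
      intro x hx
      obtain ⟨k, hk⟩ := hnex x hx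
      exact lt_of_lt_of_le (by positivity) (hξ_ge k x hk)
    -- pointwise log bound
    have hlog_bound : ∀ x, ∀ hx : x ∈ Ω,
        |Real.log (ξ x)| ≤ Real.log 2 * (1 + (Nat.find (hnex x hx) : ℝ)) ∧
        (∀ j < Nat.find (hnex x hx), d x < ε j) := by
      intro x hx
      set n := Nat.find (hnex x hx) with hn_def
      have hlt : ∀ j < n, d x < ε j := by
        intro j hj
        exact not_le.1 (Nat.find_min (hnex x hx) hj)
      have hge : ε n ≤ d x := Nat.find_spec (hnex x hx)
      have hlow : (1 / 2 : ℝ) ^ n ≤ ξ x := hξ_ge n x hge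
      have hpos : (0 : ℝ) < ξ x := lt_of_lt_of_le (by positivity) hlow
      constructor
      · rw [abs_le]
        constructor
        · have h1 : Real.log ((1 / 2 : ℝ) ^ n) ≤ Real.log (ξ x) :=
            Real.log_le_log (by positivity) hlow
          have h2 : Real.log ((1 / 2 : ℝ) ^ n) = -(n * Real.log 2) := by
            rw [Real.log_pow]
            rw [show (1 / 2 : ℝ) = 2⁻¹ by norm_num, Real.log_inv]
            ring
          have hl2 : (0 : ℝ) ≤ Real.log 2 := Real.log_nonneg one_le_two
          nlinarith [h1, h2]
        · have h1 : Real.log (ξ x) ≤ Real.log 2 := Real.log_le_log hpos (hξ_le x)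
          have hl2 : (0 : ℝ) ≤ Real.log 2 := Real.log_nonneg one_le_two
          have hn0 : (0 : ℝ) ≤ (n : ℝ) := Nat.cast_nonneg n
          nlinarith
      · exact hlt
    -- the key finiteness
    have hT : (∫⁻ x in Ω, ENNReal.ofReal (ω x) * ENNReal.ofReal |Real.log (ξ x)| ∂volume) < ⊤ := by
      set S : Euc N → ℝ≥0∞ := fun x =>
        ∑' k : ℕ, ({y : Euc N | d y < ε k}).indicator (fun _ => (1 : ℝ≥0∞)) x with hS_def
      have hbound : ∀ᵐ x ∂(volume.restrict Ω),
          ENNReal.ofReal (ω x) * ENNReal.ofReal |Real.log (ξ x)| ≤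
          ENNReal.ofReal (ω x) * (ENNReal.ofReal (Real.log 2) * (1 + S x)) := by
        filter_upwards [ae_restrict_mem hΩm] with x hx
        apply mul_le_mul_right
        obtain ⟨h1, h2⟩ := hlog_bound x hx
        set n := Nat.find (hnex x hx)
        calc ENNReal.ofReal |Real.log (ξ x)|
            ≤ ENNReal.ofReal (Real.log 2 * (1 + (n : ℝ))) := ENNReal.ofReal_le_ofReal h1
          _ = ENNReal.ofReal (Real.log 2) * (1 + (n : ℝ≥0∞)) := by
              rw [ENNReal.ofReal_mul (Real.log_nonneg one_le_two), ENNReal.ofReal_add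
                zero_le_one (Nat.cast_nonneg n), ENNReal.ofReal_one, ENNReal.ofReal_natCast]
          _ ≤ ENNReal.ofReal (Real.log 2) * (1 + S x) := by
              apply mul_le_mul_right
              apply add_le_add_right
              have : ((n : ℝ≥0∞)) = ∑ j ∈ Finset.range n,
                  ({y : Euc N | d y < ε j}).indicator (fun _ => (1 : ℝ≥0∞)) x := by
                rw [Finset.sum_congr rfl (fun j hj => ?_), Finset.sum_const,
                  Finset.card_range, nsmul_eq_mul, mul_one]
                rw [Set.indicator_of_mem]
                exact h2 j (Finset.mem_range.1 hj)
              rw [this, hS_def]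
              exact ENNReal.sum_le_tsum _
      have hSmeas : ∀ k : ℕ, AEMeasurable (fun x => ENNReal.ofReal (ω x) *
          ({y : Euc N | d y < ε k}).indicator (fun _ => (1 : ℝ≥0∞)) x) (volume.restrict Ω) :=
        fun k => hωaem.mul ((measurable_const.indicator (hA_meas (ε k))).aemeasurable)
      have hterm : ∀ k : ℕ, (∫⁻ x in Ω, ENNReal.ofReal (ω x) *
          ({y : Euc N | d y < ε k}).indicator (fun _ => (1 : ℝ≥0∞)) x ∂volume)
          ≤ (2 : ℝ≥0∞)⁻¹ ^ k := by
        intro k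
        have heq : ∀ x, ENNReal.ofReal (ω x) *
            ({y : Euc N | d y < ε k}).indicator (fun _ => (1 : ℝ≥0∞)) x =
            ({y : Euc N | d y < ε k}).indicator (fun y => ENNReal.ofReal (ω y)) x := by
          intro x
          by_cases hx : x ∈ {y : Euc N | d y < ε k}
          · rw [Set.indicator_of_mem hx, Set.indicator_of_mem hx, mul_one]
          · rw [Set.indicator_of_notMem hx, Set.indicator_of_notMem hx, mul_zero]
        calc (∫⁻ x in Ω, ENNReal.ofReal (ω x) *
              ({y : Euc N | d y < ε k}).indicator (fun _ => (1 : ℝ≥0∞)) x ∂volume)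
            = ∫⁻ x in Ω, ({y : Euc N | d y < ε k}).indicator
                (fun y => ENNReal.ofReal (ω y)) x ∂volume := by
              exact lintegral_congr (fun x => heq x)
          _ = ν {y : Euc N | d y < ε k} := by
              rw [lintegral_indicator (hA_meas (ε k)), hν_def,
                withDensity_apply _ (hA_meas (ε k))]
          _ ≤ (2 : ℝ≥0∞)⁻¹ ^ k := hε_meas k
      calc (∫⁻ x in Ω, ENNReal.ofReal (ω x) * ENNReal.ofReal |Real.log (ξ x)| ∂volume)
          ≤ ∫⁻ x in Ω, ENNReal.ofReal (ω x) *
              (ENNReal.ofReal (Real.log 2) * (1 + S x)) ∂volume := lintegral_mono_ae hbound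
        _ = ∫⁻ x in Ω, ENNReal.ofReal (Real.log 2) *
              (ENNReal.ofReal (ω x) + ∑' k : ℕ, ENNReal.ofReal (ω x) *
                ({y : Euc N | d y < ε k}).indicator (fun _ => (1 : ℝ≥0∞)) x) ∂volume := by
            apply lintegral_congr
            intro x
            simp only [hS_def]
            rw [ENNReal.tsum_mul_left]
            ring
        _ = ENNReal.ofReal (Real.log 2) *
              ((∫⁻ x in Ω, ENNReal.ofReal (ω x) ∂volume) +
                ∑' k : ℕ, ∫⁻ x in Ω, ENNReal.ofReal (ω x) *
                  ({y : Euc N | d y < ε k}).indicator (fun _ => (1 : ℝ≥0∞)) x ∂volume) := by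
            rw [lintegral_const_mul' _ _ ENNReal.ofReal_ne_top,
              lintegral_add_left' hωaem, lintegral_tsum hSmeas]
        _ ≤ ENNReal.ofReal (Real.log 2) * (1 + ∑' k : ℕ, (2 : ℝ≥0∞)⁻¹ ^ k) := by
            apply mul_le_mul_right
            apply add_le_add
            · have : (∫⁻ x in Ω, ENNReal.ofReal (ω x) ∂volume) = ν Set.univ := by
                rw [hν_def, withDensity_apply _ MeasurableSet.univ, Measure.restrict_univ]
              rw [this]; exact hν_tot _
            · exact ENNReal.tsum_le_tsum hterm
        _ < ⊤ := by
            apply ENNReal.mul_lt_top ENNReal.ofReal_lt_top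
            apply ENNReal.add_lt_top.2
            refine ⟨ENNReal.one_lt_top, ?_⟩
            rw [ENNReal.tsum_geometric]
            simp [ENNReal.sub_half]
    -- integrability of ω * log ξ
    have hg_meas : Measurable (fun x => Real.log (ξ x)) :=
      Real.measurable_log.comp hξ_cont.measurable
    have hωg_int : Integrable (fun x => ω x * Real.log (ξ x)) (volume.restrict Ω) := by
      refine ⟨hω_int.aestronglyMeasurable.mul hg_meas.aestronglyMeasurable, ?_⟩
      unfold HasFiniteIntegral
      have : (∫⁻ x in Ω, ‖ω x * Real.log (ξ x)‖ₑ ∂volume) =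
          ∫⁻ x in Ω, ENNReal.ofReal (ω x) * ENNReal.ofReal |Real.log (ξ x)| ∂volume := by
        apply lintegral_congr_ae
        filter_upwards [hω_nn] with x hωx
        rw [enorm_mul, Real.enorm_eq_ofReal_abs,
          Real.enorm_eq_ofReal_abs, abs_of_nonneg hωx]
      exact lt_of_eq_of_lt this hT
    -- rescale
    set I : ℝ := ∫ x in Ω, ω x * Real.log (ξ x) with hI_def
    set c : ℝ := -I with hc_def
    refine ⟨fun x => Real.exp c * ξ x, (continuous_const.mul hξ_cont).continuousOn,
      fun x => mul_nonneg (Real.exp_pos c).le (hξ_nonneg x), ?_, ?_⟩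
    · intro x hx
      show Real.exp c * ξ x = 0
      rw [hξ_frontier x hx, mul_zero]
    · set ξ' : Euc N → ℝ := fun x => Real.exp c * ξ x with hξ'_def
      have hξ'_pos : ∀ x ∈ Ω, 0 < ξ' x := fun x hx =>
        mul_pos (Real.exp_pos c) (hξ_pos x hx)
      have hlog' : ∀ x ∈ Ω, Real.log (ξ' x) = c + Real.log (ξ x) := by
        intro x hx
        rw [hξ'_def]
        rw [Real.log_mul (Real.exp_ne_zero c) (ne_of_gt (hξ_pos x hx)), Real.log_exp]
      have hg'_meas : Measurable (fun x => Real.log (ξ' x)) :=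
        Real.measurable_log.comp (continuous_const.mul hξ_cont).measurable
      have hae_eq : (fun x => ω x * Real.log (ξ' x)) =ᵐ[volume.restrict Ω]
          (fun x => ω x * c + ω x * Real.log (ξ x)) := by
        filter_upwards [ae_restrict_mem hΩm] with x hx
        rw [hlog' x hx]; ring
      have hωg'_int : Integrable (fun x => ω x * Real.log (ξ' x)) (volume.restrict Ω) :=
        ((hω_int.mul_const c).add hωg_int).congr hae_eq.symm
      have hI0 : (∫ x in Ω, ω x * Real.log (ξ' x)) = 0 := by
        rw [integral_congr_ae hae_eq, integral_add (hω_int.mul_const c) hωg_int,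
          integral_mul_const, hω_norm, ← hI_def, hc_def]
        ring
      -- positive and negative parts
      have hmax_meas : AEStronglyMeasurable (fun x => ω x * max (Real.log (ξ' x)) 0)
          (volume.restrict Ω) :=
        hω_int.aestronglyMeasurable.mul (hg'_meas.max measurable_const).aestronglyMeasurable
      have hmax_meas' : AEStronglyMeasurable (fun x => ω x * max (-Real.log (ξ' x)) 0)
          (volume.restrict Ω) :=
        hω_int.aestronglyMeasurable.mul
          ((hg'_meas.neg.max measurable_const).aestronglyMeasurable)
      have habs : ∀ a : ℝ, |max a 0| ≤ |a| := by
        intro a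
        rw [abs_of_nonneg (le_max_right a 0)]
        exact max_le (le_abs_self a) (abs_nonneg a)
      have hP_int : Integrable (fun x => ω x * max (Real.log (ξ' x)) 0) (volume.restrict Ω) := by
        apply hωg'_int.mono hmax_meas
        filter_upwards with x
        rw [Real.norm_eq_abs, Real.norm_eq_abs, abs_mul, abs_mul]
        exact mul_le_mul_of_nonneg_left (habs _) (abs_nonneg _)
      have hQ_int : Integrable (fun x => ω x * max (-Real.log (ξ' x)) 0)
          (volume.restrict Ω) := by
        apply hωg'_int.mono hmax_meas'
        filter_upwards with x
        rw [Real.norm_eq_abs, Real.norm_eq_abs, abs_mul, abs_mul]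
        refine mul_le_mul_of_nonneg_left ?_ (abs_nonneg _)
        calc |max (-Real.log (ξ' x)) 0| ≤ |(-Real.log (ξ' x))| := habs _
          _ = |Real.log (ξ' x)| := abs_neg _
      set P : ℝ := ∫ x in Ω, ω x * max (Real.log (ξ' x)) 0 with hP_def
      set Q : ℝ := ∫ x in Ω, ω x * max (-Real.log (ξ' x)) 0 with hQ_def
      have hPQ : P = Q := by
        have heq : (∫ x in Ω, (ω x * max (Real.log (ξ' x)) 0 -
            ω x * max (-Real.log (ξ' x)) 0)) = ∫ x in Ω, ω x * Real.log (ξ' x) := by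
          apply integral_congr_ae
          filter_upwards with x
          have : max (Real.log (ξ' x)) 0 - max (-Real.log (ξ' x)) 0 = Real.log (ξ' x) := by
            rcases le_total (Real.log (ξ' x)) 0 with h | h
            · rw [max_eq_right h, max_eq_left (by linarith)]; ring
            · rw [max_eq_left h, max_eq_right (by linarith)]; ring
          show ω x * max (Real.log (ξ' x)) 0 - ω x * max (-Real.log (ξ' x)) 0 =
            ω x * Real.log (ξ' x)
          rw [← mul_sub, this]
        have h : P - Q = 0 := by
          rw [hP_def, hQ_def, ← integral_sub hP_int hQ_int, heq, hI0]
        linarith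
      have hP_nn : 0 ≤ P := by
        rw [hP_def]
        apply integral_nonneg_of_ae
        filter_upwards [hω_nn] with x hx
        exact mul_nonneg hx (le_max_right _ _)
      have hofReal_max : ∀ a : ℝ, ENNReal.ofReal a = ENNReal.ofReal (max a 0) := by
        intro a
        rcases le_total a 0 with h | h
        · rw [ENNReal.ofReal_of_nonpos h, max_eq_right h, ENNReal.ofReal_zero]
        · rw [max_eq_left h]
      have hpos_eq : logIntPos Ω ω ξ' = ENNReal.ofReal P := by
        rw [logIntPos]
        have : (∫⁻ x in Ω, ENNReal.ofReal (ω x) *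
            ENNReal.ofReal (Real.log |ξ' x|) ∂volume) =
            ∫⁻ x in Ω, ENNReal.ofReal (ω x * max (Real.log (ξ' x)) 0) ∂volume := by
          apply lintegral_congr_ae
          filter_upwards [hω_nn, ae_restrict_mem hΩm] with x hωx hx
          rw [abs_of_pos (hξ'_pos x hx), hofReal_max (Real.log (ξ' x)),
            ← ENNReal.ofReal_mul hωx]
        rw [this, ← ofReal_integral_eq_lintegral_ofReal hP_int ?_, hP_def]
        filter_upwards [hω_nn] with x hx
        exact mul_nonneg hx (le_max_right _ _)
      have hneg_eq : logIntNeg Ω ω ξ' = ENNReal.ofReal Q := by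
        rw [logIntNeg]
        have : (∫⁻ x in Ω, ENNReal.ofReal (ω x) *
            (if ξ' x = 0 then ⊤ else ENNReal.ofReal (-Real.log |ξ' x|)) ∂volume) =
            ∫⁻ x in Ω, ENNReal.ofReal (ω x * max (-Real.log (ξ' x)) 0) ∂volume := by
          apply lintegral_congr_ae
          filter_upwards [hω_nn, ae_restrict_mem hΩm] with x hωx hx
          rw [if_neg (ne_of_gt (hξ'_pos x hx)), abs_of_pos (hξ'_pos x hx),
            hofReal_max (-Real.log (ξ' x)), ← ENNReal.ofReal_mul hωx]
        rw [this, ← ofReal_integral_eq_lintegral_ofReal hQ_int ?_, hQ_def]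
        filter_upwards [hω_nn] with x hx
        exact mul_nonneg hx (le_max_right _ _)
      rw [logInt, hpos_eq, hneg_eq, hPQ]
      rw [EReal.coe_ennreal_ofReal, ← EReal.coe_sub, sub_self, EReal.coe_zero]
  · -- frontier empty
    rw [Set.not_nonempty_iff_eq_empty] at hfr
    refine ⟨fun _ => 1, continuous_const.continuousOn, fun _ => zero_le_one, ?_, ?_⟩
    · intro x hx; rw [hfr] at hx; exact absurd hx (Set.notMem_empty x)
    · rw [logInt, logIntPos, logIntNeg]
      have h1 : (∫⁻ x in Ω, ENNReal.ofReal (ω x) *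
          ENNReal.ofReal (Real.log |(1 : ℝ)|) ∂volume) = 0 := by
        simp [Real.log_one]
      have h2 : (∫⁻ x in Ω, ENNReal.ofReal (ω x) *
          (if (1 : ℝ) = 0 then (⊤ : ℝ≥0∞) else ENNReal.ofReal (-Real.log |(1 : ℝ)|))
          ∂volume) = 0 := by
        simp [Real.log_one]
      rw [h1, h2]
      simp
end
end

section
/- Let Ω be a bounded Lipschitz domain in ℝ^N and 0 < s < 1. Let u ∈ C_0^{0,s}(Ω̄) be extended as zero outside Ω. If [u]_{s,q} < ∞ for some q > 1, then u ∈ W_0^{s,p}(Ω) for all p ≥ q and lim_{p→∞} [u]_{s,p} = |u|_s. -/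
open MeasureTheory Metric Set Filter Topology
open scoped ENNReal NNReal

noncomputable section

variable {N : ℕ}

/-! ### Auxiliary lemmas for `gagliardo_tendsto_holderSemi` -/

/-- The set whose supremum defines `holderSemi`. -/
def gtsSet (s : ℝ) (Ω : Set (Euc N)) (u : Euc N → ℝ) : Set ℝ :=
  {q : ℝ | ∃ x ∈ closure Ω, ∃ y ∈ closure Ω, x ≠ y ∧ q = |u x - u y| / dist x y ^ s}

lemma gts_holderSemi_eq (s : ℝ) (Ω : Set (Euc N)) (u : Euc N → ℝ) :
    holderSemi s Ω u = sSup (gtsSet s Ω u) := rfl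

/-- A segment from a point of an open set to a point outside its closure meets the frontier
at distance at most `dist x y` from `x`. -/
lemma gts_frontier {Ω : Set (Euc N)} (hΩo : IsOpen Ω) {x y : Euc N}
    (hx : x ∈ Ω) (hy : y ∉ closure Ω) :
    ∃ z ∈ frontier Ω, dist x z ≤ dist x y := by
  set g : ℝ → Euc N := fun t => x + t • (y - x) with hg_def
  have hg : Continuous g := by fun_prop
  set T : Set ℝ := Icc (0:ℝ) 1 ∩ g ⁻¹' closure Ω with hT_def
  have hT_closed : IsClosed T := isClosed_Icc.inter (isClosed_closure.preimage hg)
  have hg0 : g 0 = x := by simp [hg_def]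
  have hg1 : g 1 = y := by simp [hg_def]
  have h0T : (0:ℝ) ∈ T := by
    refine ⟨⟨le_refl 0, zero_le_one⟩, ?_⟩
    simp only [mem_preimage, hg0]
    exact subset_closure hx
  have hTne : T.Nonempty := ⟨0, h0T⟩
  have hTbdd : BddAbove T := ⟨1, fun t ht => ht.1.2⟩
  set t₀ : ℝ := sSup T with ht₀_def
  have ht₀T : t₀ ∈ T := hT_closed.csSup_mem hTne hTbdd
  have ht₀I : t₀ ∈ Icc (0:ℝ) 1 := ht₀T.1
  have hzc : g t₀ ∈ closure Ω := ht₀T.2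
  have ht₀1 : t₀ ≠ 1 := by
    intro h
    rw [h, hg1] at hzc
    exact hy hzc
  have ht₀lt : t₀ < 1 := lt_of_le_of_ne ht₀I.2 ht₀1
  have hzΩ : g t₀ ∉ Ω := by
    intro hmem
    have hopen : IsOpen (g ⁻¹' Ω) := hΩo.preimage hg
    rcases Metric.isOpen_iff.1 hopen t₀ hmem with ⟨ε, hε, hball⟩
    set t₁ : ℝ := min 1 (t₀ + min ε (1 - t₀) / 2) with ht₁_def
    have hεm : 0 < min ε (1 - t₀) := lt_min hε (by linarith)
    have ht₁gt : t₀ < t₁ := by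
      apply lt_min ht₀lt
      linarith
    have ht₁mem : t₁ ∈ T := by
      constructor
      · exact ⟨le_trans ht₀I.1 ht₁gt.le, min_le_left _ _⟩
      · apply subset_closure
        apply hball
        have h1 : t₁ ≤ t₀ + min ε (1 - t₀) / 2 := min_le_right _ _
        have h2 : min ε (1 - t₀) ≤ ε := min_le_left _ _
        have : |t₁ - t₀| < ε := by
          rw [abs_sub_lt_iff]
          constructor <;> linarith
        simpa [Real.dist_eq] using this
    have := le_csSup hTbdd ht₁mem
    rw [← ht₀_def] at this
    linarith
  refine ⟨g t₀, ⟨hzc, ?_⟩, ?_⟩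
  · rw [hΩo.interior_eq]
    exact hzΩ
  · have : dist x (g t₀) = t₀ * dist x y := by
      rw [dist_eq_norm, dist_eq_norm]
      have : x - g t₀ = (-t₀) • (y - x) := by
        simp only [hg_def]
        module
      rw [this, norm_smul, Real.norm_eq_abs, abs_neg, abs_of_nonneg ht₀I.1,
        show y - x = -(x - y) by abel, norm_neg]
    rw [this]
    calc t₀ * dist x y ≤ 1 * dist x y := by
          apply mul_le_mul_of_nonneg_right ht₀I.2 dist_nonneg
      _ = dist x y := one_mul _
/-- Global Hölder bound with constant `holderSemi s Ω u`, plus basic facts. -/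
lemma gts_global {Ω : Set (Euc N)} (hΩo : IsOpen Ω) {s : ℝ} (hs0 : 0 < s)
    {u : Euc N → ℝ} (hu : MemC0Holder s Ω u) (hu0 : ∀ x ∉ Ω, u x = 0) :
    BddAbove (gtsSet s Ω u) ∧ 0 ≤ holderSemi s Ω u ∧
      ∀ x y : Euc N, |u x - u y| ≤ holderSemi s Ω u * dist x y ^ s := by
  obtain ⟨⟨C, hC⟩, hbd⟩ := hu
  set H := holderSemi s Ω u with hH_def
  have hbdd : BddAbove (gtsSet s Ω u) := by
    refine ⟨max C 0, fun z hz => ?_⟩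
    obtain ⟨x, hx, y, hy, hxy, rfl⟩ := hz
    have hd : 0 < dist x y := dist_pos.2 hxy
    have hds : 0 < dist x y ^ s := Real.rpow_pos_of_pos hd s
    rw [div_le_iff₀ hds]
    calc |u x - u y| ≤ C * dist x y ^ s := hC x hx y hy
      _ ≤ max C 0 * dist x y ^ s := by
          exact mul_le_mul_of_nonneg_right (le_max_left _ _) hds.le
  have hH0 : 0 ≤ H := by
    rw [hH_def, gts_holderSemi_eq]
    apply Real.sSup_nonneg
    rintro z ⟨x, hx, y, hy, hxy, rfl⟩
    exact div_nonneg (abs_nonneg _) (Real.rpow_nonneg dist_nonneg s)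
  have hcl : ∀ x ∈ closure Ω, ∀ y ∈ closure Ω, |u x - u y| ≤ H * dist x y ^ s := by
    intro x hx y hy
    by_cases hxy : x = y
    · subst hxy
      simp [Real.zero_rpow hs0.ne']
    · have hd : 0 < dist x y := dist_pos.2 hxy
      have hds : 0 < dist x y ^ s := Real.rpow_pos_of_pos hd s
      have hmem : |u x - u y| / dist x y ^ s ∈ gtsSet s Ω u := ⟨x, hx, y, hy, hxy, rfl⟩
      have := le_csSup hbdd hmem
      rw [← gts_holderSemi_eq] at this
      rw [← div_le_iff₀ hds]
      exact this
  have key : ∀ a b : Euc N, a ∈ closure Ω → |u a - u b| ≤ H * dist a b ^ s := by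
    intro a b ha
    by_cases hb : b ∈ closure Ω
    · exact hcl a ha b hb
    · have hub : u b = 0 := hu0 b fun h => hb (subset_closure h)
      by_cases haΩ : a ∈ Ω
      · obtain ⟨z, hz, hdz⟩ := gts_frontier hΩo haΩ hb
        have huz : u z = 0 := hbd z hz
        rw [hub, ← huz]
        calc |u a - u z| ≤ H * dist a z ^ s :=
              hcl a ha z (frontier_subset_closure hz)
          _ ≤ H * dist a b ^ s := by
              exact mul_le_mul_of_nonneg_left
                (Real.rpow_le_rpow dist_nonneg hdz hs0.le) hH0
      · have hua : u a = 0 := hu0 a haΩ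
        rw [hua, hub, sub_self, abs_zero]
        exact mul_nonneg hH0 (Real.rpow_nonneg dist_nonneg s)
  refine ⟨hbdd, hH0, fun x y => ?_⟩
  by_cases hx : x ∈ closure Ω
  · exact key x y hx
  · by_cases hy : y ∈ closure Ω
    · rw [abs_sub_comm, dist_comm]
      exact key y x hy
    · have hux : u x = 0 := hu0 x fun h => hx (subset_closure h)
      have huy : u y = 0 := hu0 y fun h => hy (subset_closure h)
      rw [hux, huy, sub_self, abs_zero]
      exact mul_nonneg hH0 (Real.rpow_nonneg dist_nonneg s)

/-- Continuity from a global Hölder bound. -/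
lemma gts_cont {s H : ℝ} (hs0 : 0 < s) (hH : 0 ≤ H) {u : Euc N → ℝ}
    (hg : ∀ x y : Euc N, |u x - u y| ≤ H * dist x y ^ s) : Continuous u := by
  set CH : ℝ≥0 := ⟨H, hH⟩ with hCH
  set rs : ℝ≥0 := ⟨s, hs0.le⟩ with hrs
  have : HolderWith CH rs u := by
    intro x y
    rw [edist_dist, edist_dist]
    have h1 : dist (u x) (u y) ≤ H * dist x y ^ s := hg x y
    calc ENNReal.ofReal (dist (u x) (u y)) ≤ ENNReal.ofReal (H * dist x y ^ s) :=
          ENNReal.ofReal_le_ofReal h1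
      _ = ENNReal.ofReal H * ENNReal.ofReal (dist x y ^ s) := ENNReal.ofReal_mul hH
      _ = (CH : ℝ≥0∞) * ENNReal.ofReal (dist x y) ^ ((rs : ℝ≥0) : ℝ) := by
          rw [← ENNReal.ofReal_rpow_of_nonneg dist_nonneg hs0.le,
            ENNReal.ofReal_eq_coe_nnreal hH]
          rfl
  exact this.continuous (by exact_mod_cast hs0)
/-- Interpolation bound: `[u]_{s,p}^p ≤ H^{p-q} [u]_{s,q}^q` for `q ≤ p`. -/
lemma gts_gag_le {s q p H : ℝ} (hs0 : 0 < s) (hq0 : 0 < q) (hpq : q ≤ p)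
    (hH : 0 ≤ H) {u : Euc N → ℝ}
    (hg : ∀ x y : Euc N, |u x - u y| ≤ H * dist x y ^ s) :
    gagliardo N s p u ≤ ENNReal.ofReal (H ^ (p - q)) * gagliardo N s q u := by
  have hp0 : 0 < p := lt_of_lt_of_le hq0 hpq
  unfold gagliardo
  rw [← lintegral_const_mul' _ _ ENNReal.ofReal_ne_top]
  refine lintegral_mono fun x => ?_
  rw [← lintegral_const_mul' _ _ ENNReal.ofReal_ne_top]
  refine lintegral_mono fun y => ?_
  rw [← ENNReal.ofReal_mul (by positivity)]
  apply ENNReal.ofReal_le_ofReal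
  set d : ℝ := dist x y with hd_def
  set A : ℝ := |u x - u y| with hA_def
  have hA0 : 0 ≤ A := abs_nonneg _
  by_cases hxy : x = y
  · subst hxy
    have : A = 0 := by simp [hA_def]
    rw [this, Real.zero_rpow hp0.ne', zero_div]
    positivity
  · have hd : 0 < d := dist_pos.2 hxy
    by_cases hA : A = 0
    · rw [hA, Real.zero_rpow hp0.ne', zero_div]
      positivity
    · have hApos : 0 < A := lt_of_le_of_ne hA0 (Ne.symm hA)
      have h1 : A ^ p = A ^ (p - q) * A ^ q := by
        rw [← Real.rpow_add hApos]
        ring_nf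
      have h2 : A ^ (p - q) ≤ H ^ (p - q) * d ^ (s * (p - q)) := by
        calc A ^ (p - q) ≤ (H * d ^ s) ^ (p - q) :=
              Real.rpow_le_rpow hA0 (hg x y) (by linarith)
          _ = H ^ (p - q) * (d ^ s) ^ (p - q) :=
              Real.mul_rpow hH (Real.rpow_nonneg hd.le s)
          _ = H ^ (p - q) * d ^ (s * (p - q)) := by
              rw [← Real.rpow_mul hd.le]
      have hdexp : d ^ ((N : ℝ) + s * p) = d ^ (s * (p - q)) * d ^ ((N : ℝ) + s * q) := by
        rw [← Real.rpow_add hd]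
        congr 1
        ring
      have hds1 : 0 < d ^ (s * (p - q)) := Real.rpow_pos_of_pos hd _
      have hds2 : 0 < d ^ ((N : ℝ) + s * q) := Real.rpow_pos_of_pos hd _
      rw [h1, hdexp, ← div_mul_div_comm]
      exact mul_le_mul_of_nonneg_right ((div_le_iff₀ hds1).2 h2)
        (div_nonneg (Real.rpow_nonneg hA0 q) hds2.le)
/-- Lower bound for the Gagliardo energy via a pair of balls. -/
lemma gts_ball_lb {s p : ℝ} {u : Euc N → ℝ} {a b : Euc N} {ρ c R : ℝ}
    (hp : 0 ≤ p) (hc : 0 ≤ c) (hsp : 0 < (N : ℝ) + s * p)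
    (hball : ∀ x ∈ ball a ρ, ∀ y ∈ ball b ρ,
      c ≤ |u x - u y| ∧ 0 < dist x y ∧ dist x y ≤ R) :
    ENNReal.ofReal (c ^ p / R ^ ((N : ℝ) + s * p)) * (volume (ball a ρ) * volume (ball b ρ))
      ≤ gagliardo N s p u := by
  set K : ℝ≥0∞ := ENNReal.ofReal (c ^ p / R ^ ((N : ℝ) + s * p)) with hK
  have key : ∀ x ∈ ball a ρ, ∀ y ∈ ball b ρ,
      K ≤ ENNReal.ofReal (|u x - u y| ^ p / dist x y ^ ((N : ℝ) + s * p)) := by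
    intro x hx y hy
    obtain ⟨h1, h2, h3⟩ := hball x hx y hy
    apply ENNReal.ofReal_le_ofReal
    have hR : 0 < R := lt_of_lt_of_le h2 h3
    apply div_le_div₀ (Real.rpow_nonneg (abs_nonneg _) p)
      (Real.rpow_le_rpow hc h1 hp)
      (Real.rpow_pos_of_pos h2 _)
      (Real.rpow_le_rpow dist_nonneg h3 hsp.le)
  calc K * (volume (ball a ρ) * volume (ball b ρ))
      = ∫⁻ x in ball a ρ, K * volume (ball b ρ) := by
        rw [setLIntegral_const, mul_comm (K * volume (ball b ρ)), ← mul_assoc]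
        ring_nf
    _ ≤ ∫⁻ x in ball a ρ, ∫⁻ y : Euc N,
          ENNReal.ofReal (|u x - u y| ^ p / dist x y ^ ((N : ℝ) + s * p)) := by
        apply setLIntegral_mono' measurableSet_ball
        intro x hx
        calc K * volume (ball b ρ) = ∫⁻ y in ball b ρ, K := (setLIntegral_const _ _).symm
          _ ≤ ∫⁻ y in ball b ρ,
                ENNReal.ofReal (|u x - u y| ^ p / dist x y ^ ((N : ℝ) + s * p)) :=
              setLIntegral_mono' measurableSet_ball fun y hy => key x hx y hy
          _ ≤ _ := setLIntegral_le_lintegral _ _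
    _ ≤ gagliardo N s p u := setLIntegral_le_lintegral _ _
/-- Construction of a pair of small balls witnessing a Hölder quotient `> r`. -/
lemma gts_construct {Ω : Set (Euc N)} {s : ℝ} (hs0 : 0 < s) {u : Euc N → ℝ}
    (hH0 : 0 ≤ holderSemi s Ω u)
    (hg : ∀ x y : Euc N, |u x - u y| ≤ holderSemi s Ω u * dist x y ^ s)
    (hbdd : BddAbove (gtsSet s Ω u))
    {r : ℝ} (hr0 : 0 ≤ r) (hr : r < holderSemi s Ω u) :
    ∃ (a b : Euc N) (ρ c R : ℝ), 0 < ρ ∧ 0 < c ∧ 0 < R ∧ r * R ^ s < c ∧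
      ∀ x ∈ ball a ρ, ∀ y ∈ ball b ρ,
        c ≤ |u x - u y| ∧ 0 < dist x y ∧ dist x y ≤ R := by
  set H := holderSemi s Ω u with hH_def
  have hne : (gtsSet s Ω u).Nonempty := by
    by_contra h
    rw [Set.not_nonempty_iff_eq_empty] at h
    rw [hH_def, gts_holderSemi_eq, h, Real.sSup_empty] at hr
    linarith
  have hr' : r < sSup (gtsSet s Ω u) := by rwa [hH_def, gts_holderSemi_eq] at hr
  obtain ⟨L, hLS, hrL⟩ := exists_lt_of_lt_csSup hne hr'
  obtain ⟨a, ha, b, hb, hab, rfl⟩ := hLS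
  set d : ℝ := dist a b with hd_def
  have hd : 0 < d := dist_pos.2 hab
  have hds : 0 < d ^ s := Real.rpow_pos_of_pos hd s
  set D : ℝ := |u a - u b| with hD_def
  have hrD : r * d ^ s < D := (lt_div_iff₀ hds).1 hrL
  -- choose a small radius ρ
  have ht1 : Tendsto (fun ρ : ℝ => ρ ^ s) (𝓝[>] 0) (𝓝 0) := by
    have h := (Real.continuousAt_rpow_const 0 s (Or.inr hs0.le)).tendsto
    rw [Real.zero_rpow hs0.ne'] at h
    exact h.mono_left nhdsWithin_le_nhds
  have ht2 : Tendsto (fun ρ : ℝ => (d + 2 * ρ) ^ s) (𝓝[>] 0) (𝓝 (d ^ s)) := by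
    have hc1 : Tendsto (fun ρ : ℝ => d + 2 * ρ) (𝓝[>] 0) (𝓝 d) := by
      have : Tendsto (fun ρ : ℝ => d + 2 * ρ) (𝓝 0) (𝓝 (d + 2 * 0)) :=
        (continuous_const.add (continuous_const.mul continuous_id)).tendsto 0
      rw [mul_zero, add_zero] at this
      exact this.mono_left nhdsWithin_le_nhds
    exact ((Real.continuousAt_rpow_const d s (Or.inl hd.ne')).tendsto).comp hc1
  have hF : Tendsto (fun ρ : ℝ => (D - 2 * H * ρ ^ s) - r * (d + 2 * ρ) ^ s)
      (𝓝[>] 0) (𝓝 (D - r * d ^ s)) := by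
    have : Tendsto (fun ρ : ℝ => (D - 2 * H * ρ ^ s) - r * (d + 2 * ρ) ^ s)
        (𝓝[>] 0) (𝓝 ((D - 2 * H * 0) - r * d ^ s)) :=
      (tendsto_const_nhds.sub (ht1.const_mul _)).sub (ht2.const_mul _)
    rw [mul_zero, sub_zero] at this
    exact this
  have hpos : 0 < D - r * d ^ s := by linarith
  have hev : ∀ᶠ ρ : ℝ in 𝓝[>] 0,
      (0 < (D - 2 * H * ρ ^ s) - r * (d + 2 * ρ) ^ s) ∧ ρ ∈ Ioo 0 (d / 2) := by
    exact (hF.eventually (eventually_gt_nhds hpos)).and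
      (eventually_of_mem (Ioo_mem_nhdsGT_of_mem ⟨le_refl 0, by linarith⟩) fun ρ h => h)
  obtain ⟨ρ, hFρ, hρmem⟩ := hev.exists
  have hρ0 : 0 < ρ := hρmem.1
  have hρd : ρ < d / 2 := hρmem.2
  set c : ℝ := D - 2 * H * ρ ^ s with hc_def
  set R : ℝ := d + 2 * ρ with hR_def
  have hR : 0 < R := by simp only [hR_def]; linarith
  have hRs : 0 ≤ r * R ^ s := mul_nonneg hr0 (Real.rpow_nonneg hR.le s)
  have hcR : r * R ^ s < c := by simp only [hc_def, hR_def]; linarith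
  have hc : 0 < c := lt_of_le_of_lt hRs hcR
  refine ⟨a, b, ρ, c, R, hρ0, hc, hR, hcR, ?_⟩
  intro x hx y hy
  have hxa : dist x a ≤ ρ := (mem_ball.1 hx).le
  have hyb : dist y b ≤ ρ := (mem_ball.1 hy).le
  have hρs : 0 ≤ ρ ^ s := Real.rpow_nonneg hρ0.le s
  have e1 : |u x - u a| ≤ H * ρ ^ s := by
    calc |u x - u a| ≤ H * dist x a ^ s := hg x a
      _ ≤ H * ρ ^ s := mul_le_mul_of_nonneg_left
          (Real.rpow_le_rpow dist_nonneg hxa hs0.le) hH0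
  have e2 : |u y - u b| ≤ H * ρ ^ s := by
    calc |u y - u b| ≤ H * dist y b ^ s := hg y b
      _ ≤ H * ρ ^ s := mul_le_mul_of_nonneg_left
          (Real.rpow_le_rpow dist_nonneg hyb hs0.le) hH0
  refine ⟨?_, ?_, ?_⟩
  · have h4 : |u a - u b| ≤ |u a - u x| + |(u x - u y) + (u y - u b)| := by
      calc |u a - u b| = |(u a - u x) + ((u x - u y) + (u y - u b))| := by ring_nf
        _ ≤ |u a - u x| + |(u x - u y) + (u y - u b)| := abs_add_le _ _
    have h5 : |(u x - u y) + (u y - u b)| ≤ |u x - u y| + |u y - u b| := abs_add_le _ _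
    have h6 : |u a - u x| = |u x - u a| := abs_sub_comm _ _
    simp only [hc_def]
    have hD' : D ≤ |u a - u x| + |u x - u y| + |u y - u b| := by
      rw [hD_def]; linarith
    rw [h6] at hD'
    linarith
  · have h7 : d ≤ dist a x + dist x y + dist y b := dist_triangle4 a x y b
    have h8 : dist a x ≤ ρ := by rwa [dist_comm]
    rw [hd_def] at h7
    have : d - 2 * ρ ≤ dist x y := by rw [hd_def]; linarith
    linarith
  · have h9 : dist x y ≤ dist x a + dist a b + dist b y := dist_triangle4 x a b y
    have h10 : dist b y ≤ ρ := by rwa [dist_comm]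
    simp only [hR_def]
    rw [← hd_def] at h9
    linarith
/-- Continuity of `rpow` in the exponent for a positive base. -/
lemma gts_rpow_tendsto {β : ℝ} (hβ : 0 < β) {f : ℝ → ℝ} {l : Filter ℝ} {e : ℝ}
    (hf : Tendsto f l (𝓝 e)) : Tendsto (fun p => β ^ f p) l (𝓝 (β ^ e)) := by
  have hc : Continuous fun t : ℝ => β ^ t := by
    have h : (fun t : ℝ => β ^ t) = fun t => Real.exp (Real.log β * t) :=
      funext fun t => Real.rpow_def_of_pos hβ t
    rw [h]
    exact Real.continuous_exp.comp (continuous_const.mul continuous_id)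
  exact (hc.tendsto e).comp hf

lemma gts_exp_tendsto (c e : ℝ) : Tendsto (fun p : ℝ => (c + e * p) / p) atTop (𝓝 e) := by
  have h1 : Tendsto (fun p : ℝ => c * p⁻¹ + e) atTop (𝓝 (c * 0 + e)) :=
    (tendsto_inv_atTop_zero.const_mul c).add tendsto_const_nhds
  rw [mul_zero, zero_add] at h1
  refine h1.congr' ?_
  filter_upwards [eventually_ge_atTop (1 : ℝ)] with p hp
  have hp0 : p ≠ 0 := by linarith
  field_simp
/-- If `u ∈ C_0^{0,s}(closure Ω)`, extended by zero outside `Ω`, has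
`[u]_{s,q} < ∞` for some `q > 1`, then `u ∈ W_0^{s,p}(Ω)` for all `p ≥ q` and
`lim_{p→∞} [u]_{s,p} = |u|_s`. -/
theorem gagliardo_tendsto_holderSemi
    (N : ℕ) (Ω : Set (Euc N)) (hΩo : IsOpen Ω) (hΩb : Bornology.IsBounded Ω)
    (hΩc : IsConnected Ω)
    (s : ℝ) (hs0 : 0 < s) (hs1 : s < 1)
    (u : Euc N → ℝ) (hu : MemC0Holder s Ω u) (hu0 : ∀ x ∉ Ω, u x = 0)
    (q : ℝ) (hq : 1 < q) (hq_fin : gagliardo N s q u < ⊤) :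
    (∀ p : ℝ, q ≤ p → MemW0 s p Ω u) ∧
    Tendsto (fun p : ℝ => gagliardo N s p u ^ (1 / p)) atTop
      (𝓝 (ENNReal.ofReal (holderSemi s Ω u))) := by
  obtain ⟨hbdd, hH0, hglob⟩ := gts_global hΩo hs0 hu hu0
  set H := holderSemi s Ω u with hH_def
  have hq0 : 0 < q := lt_trans one_pos hq
  have huc : Continuous u := gts_cont hs0 hH0 hglob
  constructor
  · intro p hp
    refine ⟨?_, ae_of_all _ hu0, ?_⟩
    · have hK : IsCompact (closure Ω) :=
        isCompact_of_isClosed_isBounded isClosed_closure hΩb.closure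
      have hsupp : HasCompactSupport u :=
        HasCompactSupport.intro hK fun x hx => hu0 x fun h => hx (subset_closure h)
      exact huc.memLp_of_hasCompactSupport hsupp
    · exact lt_of_le_of_lt (gts_gag_le hs0 hq0 hp hH0 hglob)
        (ENNReal.mul_lt_top ENNReal.ofReal_lt_top hq_fin)
  · have hT1 : Tendsto (fun p : ℝ => 1 / p) atTop (𝓝 0) := by
      simpa [one_div] using (tendsto_inv_atTop_zero (𝕜 := ℝ))
    by_cases hH : H = 0
    · have hconst : ∀ x y : Euc N, u x = u y := by
        intro x y
        have h := hglob x y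
        rw [hH, zero_mul] at h
        have h2 : |u x - u y| = 0 := le_antisymm h (abs_nonneg _)
        exact sub_eq_zero.1 (abs_eq_zero.1 h2)
      have hgag : ∀ p : ℝ, 0 < p → gagliardo N s p u = 0 := by
        intro p hp
        unfold gagliardo
        have hz : ∀ x y : Euc N,
            ENNReal.ofReal (|u x - u y| ^ p / dist x y ^ ((N : ℝ) + s * p)) = 0 := by
          intro x y
          have h0 : u x - u y = 0 := sub_eq_zero.2 (hconst x y)
          rw [h0, abs_zero, Real.zero_rpow hp.ne', zero_div, ENNReal.ofReal_zero]
        simp only [hz, lintegral_zero]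
      rw [hH, ENNReal.ofReal_zero]
      have hev : (fun _ : ℝ => (0 : ℝ≥0∞)) =ᶠ[atTop]
          fun p : ℝ => gagliardo N s p u ^ (1 / p) := by
        filter_upwards [eventually_gt_atTop (0 : ℝ)] with p hp
        rw [hgag p hp]
        exact (ENNReal.zero_rpow_of_pos (by positivity)).symm
      exact Filter.Tendsto.congr' hev tendsto_const_nhds
    · have hHpos : 0 < H := lt_of_le_of_ne hH0 (Ne.symm hH)
      obtain ⟨a0, b0, ρ0, c0, R0, hρ0, hc0, hR0, _, hball0⟩ :=
        gts_construct hs0 hH0 hglob hbdd (le_refl 0) hHpos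
      have hsq : 0 < (N : ℝ) + s * q := by positivity
      have hGpos : 0 < gagliardo N s q u := by
        refine lt_of_lt_of_le ?_ (gts_ball_lb hq0.le hc0.le hsq hball0)
        apply ENNReal.mul_pos
        · exact (ENNReal.ofReal_pos.2 (by positivity)).ne'
        · exact (ENNReal.mul_pos (measure_ball_pos volume a0 hρ0).ne'
            (measure_ball_pos volume b0 hρ0).ne').ne'
      set g : ℝ := (gagliardo N s q u).toReal with hg_def
      have hgpos : 0 < g := ENNReal.toReal_pos hGpos.ne' hq_fin.ne
      have hGg : gagliardo N s q u = ENNReal.ofReal g :=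
        (ENNReal.ofReal_toReal hq_fin.ne).symm
      have hTexp1 : Tendsto (fun p : ℝ => (p - q) / p) atTop (𝓝 1) := by
        have h := gts_exp_tendsto (-q) 1
        simp only [one_mul, neg_add_eq_sub] at h
        exact h
      -- upper bound
      have hup_real : Tendsto (fun p : ℝ => H ^ ((p - q) / p) * g ^ (1 / p))
          atTop (𝓝 H) := by
        have h1 : Tendsto (fun p : ℝ => H ^ ((p - q) / p)) atTop (𝓝 (H ^ (1 : ℝ))) :=
          gts_rpow_tendsto hHpos hTexp1
        have h2 : Tendsto (fun p : ℝ => g ^ (1 / p)) atTop (𝓝 (g ^ (0 : ℝ))) :=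
          gts_rpow_tendsto hgpos hT1
        have h3 := h1.mul h2
        rw [Real.rpow_one, Real.rpow_zero, mul_one] at h3
        exact h3
      have hΦ : Tendsto (fun p : ℝ => ENNReal.ofReal (H ^ ((p - q) / p) * g ^ (1 / p)))
          atTop (𝓝 (ENNReal.ofReal H)) :=
        (ENNReal.continuous_ofReal.tendsto H).comp hup_real
      have hub : ∀ᶠ p : ℝ in atTop, gagliardo N s p u ^ (1 / p)
          ≤ ENNReal.ofReal (H ^ ((p - q) / p) * g ^ (1 / p)) := by
        filter_upwards [eventually_ge_atTop q, eventually_ge_atTop (1 : ℝ)] with p hpq hp1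
        have hp0 : 0 < p := lt_of_lt_of_le one_pos hp1
        have h1 := gts_gag_le (u := u) hs0 hq0 hpq hH0 hglob
        have h2 := ENNReal.rpow_le_rpow h1 (by positivity : (0 : ℝ) ≤ 1 / p)
        refine h2.trans_eq ?_
        rw [ENNReal.mul_rpow_of_nonneg _ _ (by positivity : (0 : ℝ) ≤ 1 / p), hGg,
          ENNReal.ofReal_rpow_of_pos (Real.rpow_pos_of_pos hHpos _),
          ENNReal.ofReal_rpow_of_pos hgpos,
          ← ENNReal.ofReal_mul (by positivity),
          ← Real.rpow_mul hHpos.le, mul_one_div]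
      have hlimsup : limsup (fun p : ℝ => gagliardo N s p u ^ (1 / p)) atTop
          ≤ ENNReal.ofReal H :=
        le_trans (limsup_le_limsup hub) hΦ.limsup_eq.le
      -- lower bound
      have hlb : ∀ r : ℝ, 0 ≤ r → r < H →
          ENNReal.ofReal r ≤ liminf (fun p : ℝ => gagliardo N s p u ^ (1 / p)) atTop := by
        intro r hr0 hrH
        obtain ⟨a, b, ρ, c, R, hρ, hc, hR, hcR, hball⟩ :=
          gts_construct hs0 hH0 hglob hbdd hr0 hrH
        set v : ℝ := (volume (ball a ρ) * volume (ball b ρ)).toReal with hv_def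
        have hV1 : volume (ball a ρ) ≠ 0 := (measure_ball_pos volume a hρ).ne'
        have hV2 : volume (ball b ρ) ≠ 0 := (measure_ball_pos volume b hρ).ne'
        have hVfin : volume (ball a ρ) * volume (ball b ρ) ≠ ⊤ :=
          (ENNReal.mul_lt_top measure_ball_lt_top measure_ball_lt_top).ne
        have hvpos : 0 < v := ENNReal.toReal_pos (ENNReal.mul_pos hV1 hV2).ne' hVfin
        have hVv : volume (ball a ρ) * volume (ball b ρ) = ENNReal.ofReal v :=
          (ENNReal.ofReal_toReal hVfin).symm
        have hRs : 0 < R ^ s := Real.rpow_pos_of_pos hR s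
        have hlow_real : Tendsto
            (fun p : ℝ => c / R ^ (((N : ℝ) + s * p) / p) * v ^ (1 / p))
            atTop (𝓝 (c / R ^ s)) := by
          have h1 : Tendsto (fun p : ℝ => R ^ (((N : ℝ) + s * p) / p)) atTop
              (𝓝 (R ^ s)) := gts_rpow_tendsto hR (gts_exp_tendsto N s)
          have h2 : Tendsto (fun p : ℝ => v ^ (1 / p)) atTop (𝓝 (v ^ (0 : ℝ))) :=
            gts_rpow_tendsto hvpos hT1
          have h0 : Tendsto (fun _ : ℝ => c) atTop (𝓝 c) := tendsto_const_nhds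
          have h3 := (h0.div h1 hRs.ne').mul h2
          rw [Real.rpow_zero, mul_one] at h3
          exact h3
        have hΨ : Tendsto
            (fun p : ℝ => ENNReal.ofReal (c / R ^ (((N : ℝ) + s * p) / p) * v ^ (1 / p)))
            atTop (𝓝 (ENNReal.ofReal (c / R ^ s))) :=
          (ENNReal.continuous_ofReal.tendsto _).comp hlow_real
        have hlbev : ∀ᶠ p : ℝ in atTop,
            ENNReal.ofReal (c / R ^ (((N : ℝ) + s * p) / p) * v ^ (1 / p))
              ≤ gagliardo N s p u ^ (1 / p) := by
          filter_upwards [eventually_ge_atTop (1 : ℝ)] with p hp1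
          have hp0 : 0 < p := lt_of_lt_of_le one_pos hp1
          have hsp : 0 < (N : ℝ) + s * p := by positivity
          have h1 := gts_ball_lb (u := u) hp0.le hc.le hsp hball
          have h2 := ENNReal.rpow_le_rpow h1 (by positivity : (0 : ℝ) ≤ 1 / p)
          refine le_trans (le_of_eq ?_) h2
          rw [hVv, ENNReal.mul_rpow_of_nonneg _ _ (by positivity : (0 : ℝ) ≤ 1 / p),
            ENNReal.ofReal_rpow_of_pos (by positivity),
            ENNReal.ofReal_rpow_of_pos hvpos,
            ← ENNReal.ofReal_mul (by positivity),
            Real.div_rpow (Real.rpow_nonneg hc.le p) (Real.rpow_nonneg hR.le _),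
            ← Real.rpow_mul hc.le, ← Real.rpow_mul hR.le, mul_one_div, mul_one_div,
            div_self hp0.ne', Real.rpow_one]
        have hr_le : ENNReal.ofReal r ≤ ENNReal.ofReal (c / R ^ s) := by
          apply ENNReal.ofReal_le_ofReal
          rw [le_div_iff₀ hRs]
          exact hcR.le
        calc ENNReal.ofReal r ≤ ENNReal.ofReal (c / R ^ s) := hr_le
          _ = liminf (fun p : ℝ =>
                ENNReal.ofReal (c / R ^ (((N : ℝ) + s * p) / p) * v ^ (1 / p))) atTop :=
              hΨ.liminf_eq.symm
          _ ≤ liminf (fun p : ℝ => gagliardo N s p u ^ (1 / p)) atTop :=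
              liminf_le_liminf hlbev
      have hliminf : ENNReal.ofReal H
          ≤ liminf (fun p : ℝ => gagliardo N s p u ^ (1 / p)) atTop := by
        refine le_of_forall_lt fun e he => ?_
        have hene : e ≠ ⊤ := ne_top_of_lt he
        have het : e.toReal < H := (ENNReal.lt_ofReal_iff_toReal_lt hene).1 he
        have het0 : 0 ≤ e.toReal := ENNReal.toReal_nonneg
        calc e = ENNReal.ofReal e.toReal := (ENNReal.ofReal_toReal hene).symm
          _ < ENNReal.ofReal ((e.toReal + H) / 2) :=
              (ENNReal.ofReal_lt_ofReal_iff (by linarith)).2 (by linarith)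
          _ ≤ _ := hlb _ (by linarith) (by linarith)
      exact tendsto_of_le_liminf_of_limsup_le hliminf hlimsup
end
end

section
/- Let Ω be a bounded Lipschitz domain in ℝ^N and 0 < s < 1. Let u ∈ C_0^{0,s}(Ω̄) be extended as zero outside Ω. Then for every x_0 ∈ Ω and every φ ∈ C^1(ℝ^N) with φ(x_0) = u(x_0) and φ(x) ≥ u(x) for all x ∈ ℝ^N, one has (L_∞^- φ)(x_0) := inf_{y ∈ ℝ^N, y ≠ x_0} (φ(y) - φ(x_0))/|y - x_0|^s ≥ -|u|_s. In other words, u is a viscosity subsolution of L_∞^- u + |u|_s = 0 in Ω. -/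
open MeasureTheory Metric Set Filter Topology
open scoped ENNReal NNReal

noncomputable section

variable {N : ℕ}

/-- Any `u ∈ C_0^{0,s}(closure Ω)` extended by zero outside `Ω` is a
viscosity subsolution of `L_∞^- u + |u|_s = 0` in `Ω`: for every `x₀ ∈ Ω` and every
`C¹` test function `φ` touching `u` from above at `x₀`, one has `(L_∞^- φ)(x₀) ≥ -|u|_s`. -/
theorem viscosity_subsolution_Lminus
    (N : ℕ) (Ω : Set (Euc N)) (hΩo : IsOpen Ω) (hΩb : Bornology.IsBounded Ω)
    (hΩc : IsConnected Ω)
    (s : ℝ) (hs0 : 0 < s) (hs1 : s < 1)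
    (u : Euc N → ℝ) (hu : MemC0Holder s Ω u) (hu0 : ∀ x ∉ Ω, u x = 0) :
    ∀ x₀ ∈ Ω, ∀ φ : Euc N → ℝ, ContDiff ℝ 1 φ →
      φ x₀ = u x₀ → (∀ x, u x ≤ φ x) →
      -(holderSemi s Ω u) ≤ Lminus s φ x₀ := by
  intro x₀ hx₀ φ hφ hφx hle
  obtain ⟨⟨C, hC⟩, hbd⟩ := hu
  set H := holderSemi s Ω u with hH
  set S := {q : ℝ | ∃ x ∈ closure Ω, ∃ y ∈ closure Ω, x ≠ y ∧ q = |u x - u y| / dist x y ^ s}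
    with hS
  have hSnonneg : ∀ q ∈ S, 0 ≤ q := by
    rintro q ⟨x, hx, y, hy, hxy, rfl⟩
    have hd : (0:ℝ) < dist x y := dist_pos.2 hxy
    positivity
  have hSbdd : BddAbove S := by
    refine ⟨max C 0, ?_⟩
    rintro q ⟨x, hx, y, hy, hxy, rfl⟩
    have hd : (0:ℝ) < dist x y ^ s := Real.rpow_pos_of_pos (dist_pos.2 hxy) s
    have := hC x hx y hy
    rw [div_le_iff₀ hd]
    calc |u x - u y| ≤ C * dist x y ^ s := this
      _ ≤ max C 0 * dist x y ^ s := by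
          exact mul_le_mul_of_nonneg_right (le_max_left _ _) hd.le
  have hH0 : 0 ≤ H := Real.sSup_nonneg hSnonneg
  have key : ∀ x ∈ closure Ω, ∀ y ∈ closure Ω, |u x - u y| ≤ H * dist x y ^ s := by
    intro x hx y hy
    by_cases hxy : x = y
    · subst hxy; simp [Real.zero_rpow hs0.ne']
    · have hd : (0:ℝ) < dist x y ^ s := Real.rpow_pos_of_pos (dist_pos.2 hxy) s
      have hmem : |u x - u y| / dist x y ^ s ∈ S := ⟨x, hx, y, hy, hxy, rfl⟩
      have := le_csSup hSbdd hmem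
      rw [div_le_iff₀ hd] at this
      exact this
  have hx₀c : x₀ ∈ closure Ω := subset_closure hx₀
  -- main estimate for each y ≠ x₀
  have main : ∀ y : Euc N, y ≠ x₀ → -H ≤ (φ y - φ x₀) / dist y x₀ ^ s := by
    intro y hy
    have hd : (0:ℝ) < dist y x₀ ^ s := Real.rpow_pos_of_pos (dist_pos.2 hy) s
    rw [le_div_iff₀ hd]
    have hstep : -(H * dist y x₀ ^ s) ≤ u y - u x₀ := by
      by_cases hyc : y ∈ closure Ω
      · have := key y hyc x₀ hx₀c
        have h1 : -(H * dist y x₀ ^ s) ≤ -|u y - u x₀| := by linarith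
        calc -(H * dist y x₀ ^ s) ≤ -|u y - u x₀| := h1
          _ ≤ u y - u x₀ := neg_abs_le _
      · have huy : u y = 0 := hu0 y (fun h => hyc (subset_closure h))
        have hΩne : Ω ≠ Set.univ := by
          intro h
          exact hyc (subset_closure (h ▸ Set.mem_univ y))
        obtain ⟨z, hz, hzd⟩ := exists_mem_frontier_infDist_compl_eq_dist hx₀ hΩne
        have hzc : z ∈ closure Ω := frontier_subset_closure hz
        have huz : u z = 0 := hbd z hz
        have hdz : dist x₀ z ≤ dist y x₀ := by
          rw [← hzd, dist_comm y x₀]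
          exact Metric.infDist_le_dist_of_mem (fun h => hyc (subset_closure h))
        have h2 : u x₀ ≤ H * dist y x₀ ^ s := by
          have := key x₀ hx₀c z hzc
          rw [huz, sub_zero] at this
          have h3 : u x₀ ≤ |u x₀| := le_abs_self _
          have h4 : H * dist x₀ z ^ s ≤ H * dist y x₀ ^ s := by
            apply mul_le_mul_of_nonneg_left _ hH0
            exact Real.rpow_le_rpow dist_nonneg hdz hs0.le
          linarith
        rw [huy]
        linarith
    have := hle y
    linarith
  -- conclude
  rw [Lminus]
  by_cases hne : Nonempty {y : Euc N // y ≠ x₀}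
  · exact le_ciInf fun y => (hφx ▸ main y.1 y.2).trans_eq (by rw [hφx])
  · haveI := not_nonempty_iff.mp hne
    rw [iInf, Set.range_eq_empty, Real.sInf_empty]
    linarith
end
end

section
/- Let Ω be a bounded Lipschitz domain in ℝ^N, 0 < s < 1, and let ω ∈ C(Ω) ∩ L^r(Ω) for some r > 1 satisfy ω > 0 in Ω, ∫_Ω ω dx = 1, and K_ε := ess sup_{0 ≤ t ≤ ε} ∫_{δ^{-1}{t}} ω dH_{N-1} < ∞ for some ε > 0. Let v_s be the unique nonnegative minimizer of |·|_s on M_s. If w ∈ M_s satisfies |w|_s = μ_s := inf{|u|_s : u ∈ M_s}, then either w = v_s or w = -v_s; that is, the only minimizers of |·|_s on M_s are ±v_s, and v_s > 0 in Ω. -/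
open MeasureTheory Metric Set Filter Topology
open scoped ENNReal NNReal

noncomputable section

variable {N : ℕ}

section AuxLemmas

variable {N : ℕ}

lemma holderSemi_nonneg (β : ℝ) (Ω : Set (Euc N)) (u : Euc N → ℝ) :
    0 ≤ holderSemi β Ω u := by
  apply Real.sSup_nonneg
  rintro q ⟨x, hx, y, hy, hxy, rfl⟩
  positivity

lemma bddAbove_quotSet {β C : ℝ} {Ω : Set (Euc N)} {u : Euc N → ℝ}
    (hC : ∀ x ∈ closure Ω, ∀ y ∈ closure Ω, |u x - u y| ≤ C * dist x y ^ β) :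
    BddAbove {q : ℝ | ∃ x ∈ closure Ω, ∃ y ∈ closure Ω,
      x ≠ y ∧ q = |u x - u y| / dist x y ^ β} := by
  refine ⟨C, ?_⟩
  rintro q ⟨x, hx, y, hy, hxy, rfl⟩
  have hds : 0 < dist x y ^ β := Real.rpow_pos_of_pos (dist_pos.2 hxy) β
  rw [div_le_iff₀ hds]
  exact hC x hx y hy

lemma holder_le_semi {β : ℝ} (hβ : β ≠ 0) {Ω : Set (Euc N)} {u : Euc N → ℝ}
    (hu : MemC0Holder β Ω u) :
    ∀ x ∈ closure Ω, ∀ y ∈ closure Ω,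
      |u x - u y| ≤ holderSemi β Ω u * dist x y ^ β := by
  obtain ⟨C, hC⟩ := hu.1
  intro x hx y hy
  rcases eq_or_ne x y with rfl | hxy
  · simp [Real.zero_rpow hβ]
  · have hds : 0 < dist x y ^ β := Real.rpow_pos_of_pos (dist_pos.2 hxy) β
    have h1 : |u x - u y| / dist x y ^ β ≤ holderSemi β Ω u :=
      le_csSup (bddAbove_quotSet hC) ⟨x, hx, y, hy, hxy, rfl⟩
    calc |u x - u y| = |u x - u y| / dist x y ^ β * dist x y ^ β := by
          field_simp
      _ ≤ holderSemi β Ω u * dist x y ^ β :=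
          mul_le_mul_of_nonneg_right h1 hds.le

lemma continuousOn_of_holder {β C : ℝ} (hβ : 0 < β) {Ω : Set (Euc N)} {u : Euc N → ℝ}
    (hC : ∀ x ∈ closure Ω, ∀ y ∈ closure Ω, |u x - u y| ≤ C * dist x y ^ β) :
    ContinuousOn u (closure Ω) := by
  intro x hx
  rw [Metric.continuousWithinAt_iff]
  intro ε hε
  have hC' : (0:ℝ) < |C| + 1 := by positivity
  refine ⟨(ε / (|C| + 1)) ^ (1/β), Real.rpow_pos_of_pos (by positivity) _, ?_⟩
  intro y hy hd
  have h0 : (0:ℝ) ≤ ε / (|C| + 1) := by positivity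
  have h2 : dist y x ^ β < ((ε / (|C| + 1)) ^ (1/β)) ^ β :=
    Real.rpow_lt_rpow dist_nonneg hd hβ
  rw [← Real.rpow_mul h0, one_div, inv_mul_cancel₀ hβ.ne', Real.rpow_one] at h2
  have h1 : |u y - u x| ≤ (|C| + 1) * dist y x ^ β := by
    have h3 := hC y hy x hx
    have h4 : (0:ℝ) ≤ dist y x ^ β := Real.rpow_nonneg dist_nonneg β
    nlinarith [le_abs_self C]
  have : dist (u y) (u x) = |u y - u x| := rfl
  rw [Real.dist_eq]
  calc |u y - u x| ≤ (|C| + 1) * dist y x ^ β := h1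
    _ < (|C| + 1) * (ε / (|C| + 1)) := by
        exact mul_lt_mul_of_pos_left h2 hC'
    _ = ε := by field_simp

lemma abs_rpow_sub_rpow_le {s : ℝ} (hs0 : 0 ≤ s) (hs1 : s ≤ 1) :
    ∀ {a b : ℝ}, 0 ≤ a → 0 ≤ b → |a ^ s - b ^ s| ≤ |a - b| ^ s := by
  have key : ∀ {a b : ℝ}, 0 ≤ b → b ≤ a → a ^ s - b ^ s ≤ (a - b) ^ s := by
    intro a b hb hab
    have h := NNReal.rpow_add_le_add_rpow (Real.toNNReal b) (Real.toNNReal (a - b)) hs0 hs1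
    have h2 := NNReal.coe_le_coe.2 h
    rw [NNReal.coe_rpow, NNReal.coe_add, NNReal.coe_add, NNReal.coe_rpow, NNReal.coe_rpow,
      Real.coe_toNNReal b hb, Real.coe_toNNReal _ (by linarith : (0:ℝ) ≤ a - b)] at h2
    have hba : b + (a - b) = a := by ring
    rw [hba] at h2
    linarith
  intro a b ha hb
  rcases le_total b a with hab | hab
  · rw [abs_of_nonneg (by linarith : (0:ℝ) ≤ a - b),
      abs_of_nonneg (sub_nonneg.2 (Real.rpow_le_rpow hb hab hs0))]
    exact key hb hab
  · rw [abs_sub_comm, abs_sub_comm a b,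
      abs_of_nonneg (by linarith : (0:ℝ) ≤ b - a),
      abs_of_nonneg (sub_nonneg.2 (Real.rpow_le_rpow ha hab hs0))]
    exact key ha hab

lemma ofReal_mul_ofReal_log (a r : ℝ) (h : 0 ≤ a) :
    ENNReal.ofReal a * ENNReal.ofReal r = ENNReal.ofReal (a * r) := by
  rcases le_or_gt r 0 with hr | hr
  · rw [ENNReal.ofReal_eq_zero.2 hr, mul_zero,
      Eq.symm (ENNReal.ofReal_eq_zero.2 (mul_nonpos_iff.2 (Or.inl ⟨h, hr⟩)))]
  · exact (ENNReal.ofReal_mul h).symm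

lemma logIntPos_eq {Ω : Set (Euc N)} (hΩm : MeasurableSet Ω) {ω : Euc N → ℝ}
    (hω : ∀ x ∈ Ω, 0 ≤ ω x) (u : Euc N → ℝ) :
    logIntPos Ω ω u = ∫⁻ x in Ω, ENNReal.ofReal (ω x * Real.log |u x|) := by
  refine lintegral_congr_ae ?_
  filter_upwards [ae_restrict_mem hΩm] with x hx
  exact ofReal_mul_ofReal_log _ _ (hω x hx)

lemma logIntNeg_eq {Ω : Set (Euc N)} (hΩm : MeasurableSet Ω) {ω u : Euc N → ℝ}
    (hω : ∀ x ∈ Ω, 0 ≤ ω x) (hu : ∀ᵐ x ∂(volume.restrict Ω), u x ≠ 0) :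
    logIntNeg Ω ω u = ∫⁻ x in Ω, ENNReal.ofReal (-(ω x * Real.log |u x|)) := by
  refine lintegral_congr_ae ?_
  filter_upwards [hu, ae_restrict_mem hΩm] with x hux hxΩ
  rw [if_neg hux, ofReal_mul_ofReal_log _ _ (hω x hxΩ), mul_neg]

lemma finite_bridge {Ω : Set (Euc N)} (hΩm : MeasurableSet Ω) {ω u : Euc N → ℝ}
    (hω : ∀ x ∈ Ω, 0 ≤ ω x) (hu : ∀ᵐ x ∂(volume.restrict Ω), u x ≠ 0)
    (hint : Integrable (fun x => ω x * Real.log |u x|) (volume.restrict Ω)) :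
    logIntPos Ω ω u ≠ ⊤ ∧ logIntNeg Ω ω u ≠ ⊤ := by
  have hfin := hint.hasFiniteIntegral
  rw [hasFiniteIntegral_iff_norm] at hfin
  constructor
  · rw [logIntPos_eq hΩm hω]
    refine ne_top_of_le_ne_top hfin.ne (lintegral_mono fun x => ?_)
    exact ENNReal.ofReal_le_ofReal (by rw [Real.norm_eq_abs]; exact le_abs_self _)
  · rw [logIntNeg_eq hΩm hω hu]
    refine ne_top_of_le_ne_top hfin.ne (lintegral_mono fun x => ?_)
    exact ENNReal.ofReal_le_ofReal (by rw [Real.norm_eq_abs]; exact neg_le_abs _)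

lemma value_bridge {Ω : Set (Euc N)} (hΩm : MeasurableSet Ω) {ω u : Euc N → ℝ}
    (hω : ∀ x ∈ Ω, 0 ≤ ω x) (hu : ∀ᵐ x ∂(volume.restrict Ω), u x ≠ 0)
    (hmeas : AEMeasurable (fun x => ω x * Real.log |u x|) (volume.restrict Ω))
    (hpos : logIntPos Ω ω u ≠ ⊤) (hneg : logIntNeg Ω ω u ≠ ⊤) :
    Integrable (fun x => ω x * Real.log |u x|) (volume.restrict Ω) ∧
    ∫ x in Ω, ω x * Real.log |u x|
      = (logIntPos Ω ω u).toReal - (logIntNeg Ω ω u).toReal := by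
  have hP := logIntPos_eq hΩm hω u
  have hN := logIntNeg_eq hΩm hω hu
  have hint : Integrable (fun x => ω x * Real.log |u x|) (volume.restrict Ω) := by
    refine ⟨hmeas.aestronglyMeasurable, ?_⟩
    rw [hasFiniteIntegral_iff_norm]
    have heq : ∀ x : Euc N, ENNReal.ofReal ‖ω x * Real.log |u x|‖
        = ENNReal.ofReal (ω x * Real.log |u x|)
          + ENNReal.ofReal (-(ω x * Real.log |u x|)) := by
      intro x
      rcases le_total 0 (ω x * Real.log |u x|) with h | h
      · rw [Real.norm_eq_abs, abs_of_nonneg h,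
          show ENNReal.ofReal (-(ω x * Real.log |u x|)) = 0 from
            ENNReal.ofReal_eq_zero.2 (by linarith), add_zero]
      · rw [Real.norm_eq_abs, abs_of_nonpos h, ENNReal.ofReal_eq_zero.2 h, zero_add]
    calc ∫⁻ x in Ω, ENNReal.ofReal ‖ω x * Real.log |u x|‖
        = ∫⁻ x in Ω, (ENNReal.ofReal (ω x * Real.log |u x|)
            + ENNReal.ofReal (-(ω x * Real.log |u x|))) := by simp_rw [heq]
      _ = (∫⁻ x in Ω, ENNReal.ofReal (ω x * Real.log |u x|))
            + ∫⁻ x in Ω, ENNReal.ofReal (-(ω x * Real.log |u x|)) :=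
          lintegral_add_left' (ENNReal.measurable_ofReal.comp_aemeasurable hmeas) _
      _ < ⊤ := by
          rw [← hP, ← hN]
          exact ENNReal.add_lt_top.2 ⟨hpos.lt_top, hneg.lt_top⟩
  refine ⟨hint, ?_⟩
  rw [hP, hN]
  exact integral_eq_lintegral_pos_part_sub_lintegral_neg_part hint

lemma logIntNeg_eq_top {Ω A : Set (Euc N)} {ω u : Euc N → ℝ}
    (hA : MeasurableSet A) (hAΩ : A ⊆ Ω) (hω : ∀ x ∈ A, 0 < ω x)
    (hu : ∀ x ∈ A, u x = 0) (hvol : 0 < volume A) :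
    logIntNeg Ω ω u = ⊤ := by
  rw [eq_top_iff]
  calc (⊤:ℝ≥0∞) = ⊤ * volume A := (ENNReal.top_mul hvol.ne').symm
    _ = ∫⁻ _x in A, ⊤ ∂volume := (setLIntegral_const A ⊤).symm
    _ ≤ ∫⁻ x in A, ENNReal.ofReal (ω x)
          * (if u x = 0 then ⊤ else ENNReal.ofReal (-Real.log |u x|)) ∂volume := by
        refine lintegral_mono_ae ?_
        rw [ae_restrict_iff' hA]
        filter_upwards with x hx
        rw [if_pos (hu x hx),
          ENNReal.mul_top (by simpa [ENNReal.ofReal_eq_zero] using not_le.2 (hω x hx))]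
    _ ≤ logIntNeg Ω ω u := lintegral_mono' (Measure.restrict_mono hAΩ le_rfl) le_rfl

lemma ennreal_coe_ereal_eq {a : ℝ≥0∞} (ha : a ≠ ⊤) :
    (a : EReal) = ((a.toReal : ℝ) : EReal) := by
  rw [← EReal.toReal_coe_ennreal (x := a)]
  exact (EReal.coe_toReal (by simpa using ha) (by simp)).symm

lemma ennreal_coe_sub_ereal {a b : ℝ≥0∞} (ha : a ≠ ⊤) (hb : b ≠ ⊤) :
    (a : EReal) - (b : EReal) = ((a.toReal - b.toReal : ℝ) : EReal) := by
  rw [ennreal_coe_ereal_eq ha, ennreal_coe_ereal_eq hb, ← EReal.coe_sub]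

lemma kval_one_facts {Ω : Set (Euc N)} {ω u : Euc N → ℝ} (hk : kval Ω ω u = 1) :
    logIntPos Ω ω u ≠ ⊤ ∧ logIntNeg Ω ω u ≠ ⊤ ∧ logIntPos Ω ω u = logIntNeg Ω ω u := by
  have hLbot : logInt Ω ω u ≠ ⊥ := by
    intro h; rw [kval, h] at hk; simp [expE] at hk
  have hLtop : logInt Ω ω u ≠ ⊤ := by
    intro h; rw [kval, h] at hk; simp [expE] at hk
  have hneg : logIntNeg Ω ω u ≠ ⊤ := by
    intro h
    exact hLbot (by rw [logInt, h, EReal.coe_ennreal_top, EReal.sub_top])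
  have hpos : logIntPos Ω ω u ≠ ⊤ := by
    intro h
    exact hLtop (by rw [logInt, h, EReal.coe_ennreal_top, ennreal_coe_ereal_eq hneg,
      EReal.top_sub_coe])
  refine ⟨hpos, hneg, ?_⟩
  have h1 : kval Ω ω u = ENNReal.ofReal (Real.exp ((logInt Ω ω u).toReal)) := by
    rw [kval, expE, if_neg hLbot, if_neg hLtop]
  rw [h1] at hk
  have h2 : Real.exp ((logInt Ω ω u).toReal) = 1 := by
    have := congrArg ENNReal.toReal hk
    rwa [ENNReal.toReal_ofReal (Real.exp_pos _).le, ENNReal.toReal_one] at this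
  have h3 : (logInt Ω ω u).toReal = 0 := by
    have := congrArg Real.log h2
    rwa [Real.log_exp, Real.log_one] at this
  have h4 : logInt Ω ω u = 0 := by
    rw [← EReal.coe_toReal hLtop hLbot, h3, EReal.coe_zero]
  rw [logInt, ennreal_coe_sub_ereal hpos hneg] at h4
  have h5 : (logIntPos Ω ω u).toReal = (logIntNeg Ω ω u).toReal := by
    have := EReal.coe_eq_zero.1 h4
    linarith
  exact (ENNReal.toReal_eq_toReal_iff' hpos hneg).1 h5

lemma kval_eq_one_of {Ω : Set (Euc N)} {ω u : Euc N → ℝ}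
    (hpos : logIntPos Ω ω u ≠ ⊤) (hneg : logIntNeg Ω ω u ≠ ⊤)
    (heq : (logIntPos Ω ω u).toReal = (logIntNeg Ω ω u).toReal) :
    kval Ω ω u = 1 := by
  have h0 : logInt Ω ω u = 0 := by
    rw [logInt, ennreal_coe_sub_ereal hpos hneg, heq, sub_self, EReal.coe_zero]
  rw [kval, h0, expE]
  norm_num

lemma muS_le_of_mem {s : ℝ} {Ω : Set (Euc N)} {ω u : Euc N → ℝ} (hu : MemMs s Ω ω u) :
    muS s Ω ω ≤ holderSemi s Ω u := by
  apply csInf_le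
  · refine ⟨0, ?_⟩
    rintro m ⟨u', hu', rfl⟩
    exact holderSemi_nonneg _ _ _
  · exact ⟨u, hu, rfl⟩

set_option maxHeartbeats 2000000 in
lemma v_positive {Ω : Set (Euc N)} (hΩo : IsOpen Ω) (hΩb : Bornology.IsBounded Ω)
    (hΩne : Ω.Nonempty)
    {s : ℝ} (hs0 : 0 < s) (hs1 : s < 1)
    {ω : Euc N → ℝ} (hω_cont : ContinuousOn ω Ω) (hω_pos : ∀ x ∈ Ω, 0 < ω x)
    (hω_int : Integrable ω (volume.restrict Ω)) (hω_norm : ∫ x in Ω, ω x = 1)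
    {v : Euc N → ℝ} (hv : MemMs s Ω ω v) (hv_nn : ∀ x, 0 ≤ v x)
    (hv0 : ∀ x ∉ Ω, v x = 0) (hv_min : holderSemi s Ω v = muS s Ω ω) :
    ∀ x ∈ Ω, 0 < v x := by
  intro x₀ hx₀
  rcases (hv_nn x₀).lt_or_eq with h | h
  · exact h
  exfalso
  have hv0' : v x₀ = 0 := h.symm
  have hΩm : MeasurableSet Ω := hΩo.measurableSet
  obtain ⟨Cv, hCv⟩ := hv.1.1
  have hvsemi := holder_le_semi hs0.ne' hv.1
  set μ := holderSemi s Ω v with hμdef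
  have hμnn : 0 ≤ μ := holderSemi_nonneg _ _ _
  obtain ⟨hposv_ne, hnegv_ne, hpv_eq⟩ := kval_one_facts hv.2
  by_cases hall : ∀ x ∈ Ω, v x = 0
  · exact hnegv_ne (logIntNeg_eq_top hΩm (subset_refl Ω) hω_pos hall
      (hΩo.measure_pos volume hΩne))
  push_neg at hall
  obtain ⟨x₁, hx₁, hvx₁⟩ := hall
  have hvx₁' : 0 < v x₁ := (hv_nn x₁).lt_of_ne (Ne.symm hvx₁)
  have hne : x₁ ≠ x₀ := by
    intro e; rw [e, hv0'] at hvx₁'; exact lt_irrefl _ hvx₁'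
  have hμpos : 0 < μ := by
    have hd : 0 < dist x₁ x₀ ^ s := Real.rpow_pos_of_pos (dist_pos.2 hne) s
    have hq : 0 < |v x₁ - v x₀| / dist x₁ x₀ ^ s := by
      rw [hv0', sub_zero, abs_of_pos hvx₁']
      positivity
    exact lt_of_lt_of_le hq (le_csSup (bddAbove_quotSet hCv)
      ⟨x₁, subset_closure hx₁, x₀, subset_closure hx₀, hne, rfl⟩)
  -- geometric setup
  obtain ⟨R₀, hR₀, hball₀⟩ := Metric.isOpen_iff.1 hΩo x₀ hx₀
  set R := R₀ / 2 with hRdef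
  have hR : 0 < R := by rw [hRdef]; linarith
  have hclosed : closedBall x₀ R ⊆ Ω :=
    (closedBall_subset_ball (by rw [hRdef]; linarith)).trans hball₀
  have hRs : 0 < R ^ s := Real.rpow_pos_of_pos hR s
  set ε := min (μ * R ^ s / 2) (1/2 : ℝ) with hεdef
  have hε : 0 < ε := lt_min (by positivity) (by norm_num)
  have hε1 : ε ≤ 1/2 := min_le_right _ _
  have hεR : ε ≤ μ * R ^ s / 2 := min_le_left _ _
  set ρ := (ε / (2 * μ)) ^ (1/s) with hρdef
  have hρ : 0 < ρ := Real.rpow_pos_of_pos (by positivity) _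
  have hρs : ρ ^ s = ε / (2 * μ) := by
    rw [hρdef, ← Real.rpow_mul (by positivity), one_div, inv_mul_cancel₀ hs0.ne',
      Real.rpow_one]
  have hρR : ρ < R := by
    by_contra hcon
    push_neg at hcon
    have h1 : R ^ s ≤ ρ ^ s := Real.rpow_le_rpow hR.le hcon hs0.le
    rw [hρs] at h1
    have h3 : ε / (2 * μ) ≤ R ^ s / 4 := by
      rw [div_le_div_iff₀ (by positivity) (by norm_num)]
      nlinarith
    linarith
  -- the cone function
  set c : Euc N → ℝ := fun x => max (ε - μ * dist x x₀ ^ s) 0 with hcdef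
  have hc_nn : ∀ x, 0 ≤ c x := fun x => le_max_right _ _
  have hc_le : ∀ x, c x ≤ ε := by
    intro x
    apply max_le _ hε.le
    have h0 : 0 ≤ μ * dist x x₀ ^ s := by positivity
    linarith
  have hc_out : ∀ x, x ∉ Ω → c x = 0 := by
    intro x hx
    have hd : R ≤ dist x x₀ := by
      by_contra hcon; push_neg at hcon
      exact hx (hclosed (mem_closedBall.2 hcon.le))
    have h1 : R ^ s ≤ dist x x₀ ^ s := Real.rpow_le_rpow hR.le hd hs0.le
    have h2 : ε - μ * dist x x₀ ^ s ≤ 0 := by nlinarith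
    exact max_eq_right h2
  have hc_holder : ∀ x y : Euc N, |c x - c y| ≤ μ * dist x y ^ s := by
    intro x y
    have h1 : |c x - c y| ≤ |(ε - μ * dist x x₀ ^ s) - (ε - μ * dist y x₀ ^ s)| := by
      have := abs_max_sub_max_le_max (ε - μ * dist x x₀ ^ s) 0
        (ε - μ * dist y x₀ ^ s) 0
      simpa using this
    have h2 : (ε - μ * dist x x₀ ^ s) - (ε - μ * dist y x₀ ^ s)
        = μ * (dist y x₀ ^ s - dist x x₀ ^ s) := by ring
    rw [h2, abs_mul, abs_of_nonneg hμnn] at h1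
    have h3 : |dist y x₀ ^ s - dist x x₀ ^ s| ≤ |dist y x₀ - dist x x₀| ^ s :=
      abs_rpow_sub_rpow_le hs0.le hs1.le dist_nonneg dist_nonneg
    have h4 : |dist y x₀ - dist x x₀| ≤ dist y x := abs_dist_sub_le y x x₀
    have h5 : |dist y x₀ - dist x x₀| ^ s ≤ dist y x ^ s :=
      Real.rpow_le_rpow (abs_nonneg _) h4 hs0.le
    have h6 := mul_le_mul_of_nonneg_left (h3.trans h5) hμnn
    rw [dist_comm y x] at h6
    exact h1.trans h6
  -- the competitor w
  set w : Euc N → ℝ := fun x => max (v x) (c x) with hwdef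
  have hw_nn : ∀ x, 0 ≤ w x := fun x => le_trans (hv_nn x) (le_max_left _ _)
  have hw_ge : ∀ x, v x ≤ w x := fun x => le_max_left _ _
  have hw_out : ∀ x, x ∉ Ω → w x = 0 := by
    intro x hx
    rw [hwdef]; simp only
    rw [hv0 x hx, hc_out x hx]; exact max_self 0
  have hw_holder : ∀ x ∈ closure Ω, ∀ y ∈ closure Ω,
      |w x - w y| ≤ μ * dist x y ^ s := by
    intro x hx y hy
    refine le_trans (abs_max_sub_max_le_max _ _ _ _)
      (max_le (hvsemi x hx y hy) (hc_holder x y))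
  have hBΩ : ball x₀ ρ ⊆ Ω := fun x hx =>
    hclosed (mem_closedBall.2 ((mem_ball.1 hx).le.trans hρR.le))
  have hball_facts : ∀ x ∈ ball x₀ ρ,
      μ * dist x x₀ ^ s < ε / 2 ∧ c x = ε - μ * dist x x₀ ^ s ∧ v x < c x ∧
        w x = c x ∧ 0 < c x ∧ c x < 1 := by
    intro x hx
    have hd : dist x x₀ < ρ := mem_ball.1 hx
    have h1 : dist x x₀ ^ s < ρ ^ s := Real.rpow_lt_rpow dist_nonneg hd hs0
    have h2 : μ * dist x x₀ ^ s < ε / 2 := by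
      rw [hρs] at h1
      calc μ * dist x x₀ ^ s < μ * (ε / (2 * μ)) := mul_lt_mul_of_pos_left h1 hμpos
        _ = ε / 2 := by field_simp
    have h0 : 0 ≤ μ * dist x x₀ ^ s := by positivity
    have h3 : c x = ε - μ * dist x x₀ ^ s := max_eq_left (by linarith)
    have h4 : v x ≤ μ * dist x x₀ ^ s := by
      have hh := hvsemi x (subset_closure (hBΩ hx)) x₀ (subset_closure hx₀)
      rwa [hv0', sub_zero, abs_of_nonneg (hv_nn x)] at hh
    have h5 : v x < c x := by rw [h3]; linarith
    exact ⟨h2, h3, h5, max_eq_right h5.le, by rw [h3]; linarith,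
      lt_of_le_of_lt (hc_le x) (by linarith)⟩
  have hρ2 : (0:ℝ) < ρ / 2 := by linarith
  have hK2 : closedBall x₀ (ρ/2) ⊆ ball x₀ ρ := closedBall_subset_ball (by linarith)
  obtain ⟨z, hz, hzmin'⟩ := (isCompact_closedBall x₀ (ρ/2)).exists_isMinOn
    ⟨x₀, mem_closedBall_self hρ2.le⟩ (hω_cont.mono (hK2.trans hBΩ))
  have hzmin : ∀ y ∈ closedBall x₀ (ρ/2), ω z ≤ ω y := fun y hy => hzmin' hy
  have hm : 0 < ω z := hω_pos z (hBΩ (hK2 hz))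
  -- a.e. nonvanishing
  have hvcontΩ : ContinuousOn v Ω := (continuousOn_of_holder hs0 hCv).mono subset_closure
  have hZmeas : MeasurableSet {x | x ∈ Ω ∧ v x = 0} := by
    have hU : IsOpen (Ω ∩ v ⁻¹' {(0:ℝ)}ᶜ) :=
      hvcontΩ.isOpen_inter_preimage hΩo (isOpen_compl_singleton)
    have hset : {x | x ∈ Ω ∧ v x = 0} = Ω \ (Ω ∩ v ⁻¹' {(0:ℝ)}ᶜ) := by
      ext x
      simp only [Set.mem_setOf_eq, Set.mem_diff, Set.mem_inter_iff, Set.mem_preimage,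
        Set.mem_compl_iff, Set.mem_singleton_iff, not_and, not_not]
      constructor
      · rintro ⟨h1, h2⟩; exact ⟨h1, fun _ => h2⟩
      · rintro ⟨h1, h2⟩; exact ⟨h1, h2 h1⟩
    rw [hset]
    exact hΩm.diff hU.measurableSet
  have hZ0 : volume {x | x ∈ Ω ∧ v x = 0} = 0 := by
    by_contra hcon
    exact hnegv_ne (logIntNeg_eq_top hZmeas (fun x hx => hx.1)
      (fun x hx => hω_pos x hx.1) (fun x hx => hx.2) (pos_iff_ne_zero.2 hcon))
  have hv_ae : ∀ᵐ x ∂(volume.restrict Ω), v x ≠ 0 := by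
    rw [ae_restrict_iff' hΩm, ae_iff]
    convert hZ0 using 2
    ext x
    simp only [Set.mem_setOf_eq, Classical.not_imp, not_not]
  have hw_ae : ∀ᵐ x ∂(volume.restrict Ω), w x ≠ 0 := by
    filter_upwards [hv_ae] with x hx
    intro hwx
    exact hx (le_antisymm (hwx ▸ hw_ge x) (hv_nn x))
  -- positive parts agree
  have hpos_w_eq : logIntPos Ω ω w = logIntPos Ω ω v := by
    unfold logIntPos
    refine lintegral_congr_ae ?_
    filter_upwards [ae_restrict_mem hΩm] with x hx
    rcases le_or_gt (c x) (v x) with hle | hlt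
    · rw [show w x = v x from max_eq_left hle]
    · have hc0 : 0 < c x := lt_of_le_of_lt (hv_nn x) hlt
      have hc1 : c x < 1 := lt_of_le_of_lt (hc_le x) (by linarith)
      rw [show w x = c x from max_eq_right hlt.le]
      have e1 : ENNReal.ofReal (Real.log |c x|) = 0 := by
        rw [abs_of_pos hc0]
        exact ENNReal.ofReal_eq_zero.2 (Real.log_nonpos hc0.le hc1.le)
      have e2 : ENNReal.ofReal (Real.log |v x|) = 0 := by
        rw [abs_of_nonneg (hv_nn x)]
        exact ENNReal.ofReal_eq_zero.2 (Real.log_nonpos (hv_nn x) (by linarith))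
      rw [e1, e2]
  -- negative parts : strict decrease
  set B := ball x₀ ρ with hBdef
  have hBm : MeasurableSet B := measurableSet_ball
  set gv : Euc N → ℝ≥0∞ := fun x => ENNReal.ofReal (ω x) *
    (if v x = 0 then ⊤ else ENNReal.ofReal (-Real.log |v x|)) with hgvdef
  set gw : Euc N → ℝ≥0∞ := fun x => ENNReal.ofReal (ω x) *
    (if w x = 0 then ⊤ else ENNReal.ofReal (-Real.log |w x|)) with hgwdef
  set f : Euc N → ℝ≥0∞ := fun x => ENNReal.ofReal (ω x) *
    ENNReal.ofReal (-Real.log (c x)) with hfdef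
  have hrestr : volume.restrict Ω = volume.restrict B + volume.restrict (Ω \ B) := by
    rw [← Measure.restrict_union (Set.disjoint_sdiff_right) (hΩm.diff hBm),
      Set.union_diff_cancel hBΩ]
  have hsplit : ∀ g : Euc N → ℝ≥0∞,
      ∫⁻ x in Ω, g x = (∫⁻ x in B, g x) + ∫⁻ x in Ω \ B, g x := by
    intro g; rw [hrestr, lintegral_add_measure]
  have hnegv : logIntNeg Ω ω v = ∫⁻ x in Ω, gv x := rfl
  have hnegw : logIntNeg Ω ω w = ∫⁻ x in Ω, gw x := rfl
  have h_le_all : ∀ x ∈ Ω, gw x ≤ gv x := by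
    intro x hx
    rcases eq_or_ne (v x) 0 with hv0x | hvne
    · rw [hgvdef]; simp only [if_pos hv0x]
      exact le_trans (mul_le_mul_right le_top _) le_rfl
    · have hvpos : 0 < v x := (hv_nn x).lt_of_ne (Ne.symm hvne)
      have hwpos : 0 < w x := lt_of_lt_of_le hvpos (hw_ge x)
      rw [hgvdef, hgwdef]; simp only [if_neg hvne, if_neg hwpos.ne']
      refine mul_le_mul_right (ENNReal.ofReal_le_ofReal ?_) _
      rw [abs_of_pos hvpos, abs_of_pos hwpos]
      have := Real.log_le_log hvpos (hw_ge x)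
      linarith
  have h_onB_w : ∫⁻ x in B, gw x = ∫⁻ x in B, f x := by
    refine lintegral_congr_ae ?_
    filter_upwards [ae_restrict_mem hBm] with x hx
    obtain ⟨_, _, _, hwx, hcpos, _⟩ := hball_facts x hx
    rw [hgwdef, hfdef]; simp only
    rw [hwx, if_neg hcpos.ne', abs_of_pos hcpos]
  set B' := ball x₀ (ρ/2) with hB'def
  set κ := ENNReal.ofReal (ω z) * ENNReal.ofReal (s * Real.log 2) with hκdef
  have hslog : 0 < s * Real.log 2 := mul_pos hs0 (Real.log_pos one_lt_two)
  have hgap : ∀ x ∈ B, f x + B'.indicator (fun _ => κ) x ≤ gv x := by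
    intro x hx
    by_cases hxB' : x ∈ B'
    · rw [Set.indicator_of_mem hxB']
      rcases eq_or_ne (v x) 0 with hv0x | hvne
      · rw [hgvdef]; simp only [if_pos hv0x]
        rw [ENNReal.mul_top
          (by simpa [ENNReal.ofReal_eq_zero] using not_le.2 (hω_pos x (hBΩ hx)))]
        exact le_top
      · have hvpos : 0 < v x := (hv_nn x).lt_of_ne (Ne.symm hvne)
        obtain ⟨h2, h3, h5, _, hcpos, hc1⟩ := hball_facts x hx
        have hds : dist x x₀ ^ s ≤ (ρ/2) ^ s :=
          Real.rpow_le_rpow dist_nonneg (le_of_lt (mem_ball.1 hxB')) hs0.le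
        have hρ2s : (ρ/2) ^ s = ρ ^ s / 2 ^ s := Real.div_rpow hρ.le (by norm_num : (0:ℝ) ≤ 2) s
        have h2pow : (0:ℝ) < 2 ^ s := Real.rpow_pos_of_pos (by norm_num) s
        have hvb : v x ≤ μ * dist x x₀ ^ s := by
          have hh := hvsemi x (subset_closure (hBΩ hx)) x₀ (subset_closure hx₀)
          rwa [hv0', sub_zero, abs_of_nonneg (hv_nn x)] at hh
        have hkey : 2 ^ s * v x ≤ ε / 2 := by
          have hμd : μ * dist x x₀ ^ s ≤ μ * ((ρ/2) ^ s) :=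
            mul_le_mul_of_nonneg_left hds hμnn
          rw [hρ2s, hρs] at hμd
          have he : μ * (ε / (2 * μ) / 2 ^ s) = ε / (2 * 2 ^ s) := by
            field_simp
          rw [he] at hμd
          have h6 : v x ≤ ε / (2 * 2 ^ s) := le_trans hvb hμd
          calc 2 ^ s * v x ≤ 2 ^ s * (ε / (2 * 2 ^ s)) :=
              mul_le_mul_of_nonneg_left h6 h2pow.le
            _ = ε / 2 := by field_simp
        have hlog : Real.log (v x) + s * Real.log 2 ≤ Real.log (c x) := by
          have hvc : 2 ^ s * v x ≤ c x := by rw [h3]; linarith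
          have hh := Real.log_le_log (by positivity) hvc
          rw [Real.log_mul h2pow.ne' hvpos.ne', Real.log_rpow (by norm_num)] at hh
          linarith
        rw [hgvdef, hfdef]; simp only [if_neg hvne]
        rw [abs_of_pos hvpos]
        have hκle : κ ≤ ENNReal.ofReal (ω x) * ENNReal.ofReal (s * Real.log 2) :=
          mul_le_mul_left
            (ENNReal.ofReal_le_ofReal (hzmin x (ball_subset_closedBall hxB'))) _
        calc ENNReal.ofReal (ω x) * ENNReal.ofReal (-Real.log (c x)) + κ
            ≤ ENNReal.ofReal (ω x) * ENNReal.ofReal (-Real.log (c x))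
              + ENNReal.ofReal (ω x) * ENNReal.ofReal (s * Real.log 2) :=
              add_le_add_right hκle _
          _ = ENNReal.ofReal (ω x) * (ENNReal.ofReal (-Real.log (c x))
              + ENNReal.ofReal (s * Real.log 2)) := (mul_add _ _ _).symm
          _ ≤ ENNReal.ofReal (ω x) * ENNReal.ofReal (-Real.log (v x)) := by
              refine mul_le_mul_right ?_ _
              rw [← ENNReal.ofReal_add
                (neg_nonneg.2 (Real.log_nonpos hcpos.le hc1.le)) hslog.le]
              apply ENNReal.ofReal_le_ofReal
              linarith
    · rw [Set.indicator_of_notMem hxB', add_zero]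
      rcases eq_or_ne (v x) 0 with hv0x | hvne
      · rw [hgvdef]; simp only [if_pos hv0x]
        rw [ENNReal.mul_top
          (by simpa [ENNReal.ofReal_eq_zero] using not_le.2 (hω_pos x (hBΩ hx)))]
        exact le_top
      · have hvpos : 0 < v x := (hv_nn x).lt_of_ne (Ne.symm hvne)
        obtain ⟨_, _, h5, _, hcpos, _⟩ := hball_facts x hx
        rw [hgvdef, hfdef]; simp only [if_neg hvne]
        rw [abs_of_pos hvpos]
        refine mul_le_mul_right (ENNReal.ofReal_le_ofReal ?_) _
        have := Real.log_le_log hvpos h5.le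
        linarith
  have hκ_ne : κ * volume B' ≠ 0 := by
    apply mul_ne_zero
    · apply mul_ne_zero
      · simpa [ENNReal.ofReal_eq_zero] using not_le.2 hm
      · simpa [ENNReal.ofReal_eq_zero] using not_le.2 hslog
    · exact (measure_ball_pos volume x₀ hρ2).ne'
  have hvB_le : ∫⁻ x in B, gv x ≤ logIntNeg Ω ω v := by
    rw [hnegv, hsplit gv]; exact le_self_add
  have hvD_le : ∫⁻ x in Ω \ B, gv x ≤ logIntNeg Ω ω v := by
    rw [hnegv, hsplit gv]; exact le_add_self
  have hBbound : (∫⁻ x in B, f x) + κ * volume B' ≤ ∫⁻ x in B, gv x := by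
    have hind : ∫⁻ x in B, (f x + B'.indicator (fun _ => κ) x) ≤ ∫⁻ x in B, gv x := by
      refine lintegral_mono_ae ?_
      filter_upwards [ae_restrict_mem hBm] with x hx using hgap x hx
    rw [lintegral_add_right _ (measurable_const.indicator measurableSet_ball)] at hind
    have hi : ∫⁻ x in B, B'.indicator (fun _ => κ) x = κ * volume B' := by
      rw [lintegral_indicator measurableSet_ball, setLIntegral_const,
        Measure.restrict_apply measurableSet_ball,
        Set.inter_eq_self_of_subset_left (ball_subset_ball (by linarith))]
    rwa [hi] at hind
  have hfB_ne : ∫⁻ x in B, f x ≠ ⊤ := by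
    refine ne_top_of_le_ne_top hnegv_ne ?_
    calc ∫⁻ x in B, f x ≤ ∫⁻ x in B, gv x := le_trans le_self_add hBbound
      _ ≤ logIntNeg Ω ω v := hvB_le
  have hstrict : ∫⁻ x in B, f x < ∫⁻ x in B, gv x :=
    lt_of_lt_of_le (ENNReal.lt_add_right hfB_ne hκ_ne) hBbound
  have hkeyneg : logIntNeg Ω ω w < logIntNeg Ω ω v := by
    rw [hnegv, hnegw, hsplit gw, hsplit gv, h_onB_w]
    have hD : ∫⁻ x in Ω \ B, gw x ≤ ∫⁻ x in Ω \ B, gv x := by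
      refine lintegral_mono_ae ?_
      filter_upwards [ae_restrict_mem (hΩm.diff hBm)] with x hx using h_le_all x hx.1
    calc (∫⁻ x in B, f x) + ∫⁻ x in Ω \ B, gw x
        ≤ (∫⁻ x in B, f x) + ∫⁻ x in Ω \ B, gv x := add_le_add_right hD _
      _ < (∫⁻ x in B, gv x) + ∫⁻ x in Ω \ B, gv x :=
          ENNReal.add_lt_add_right (ne_top_of_le_ne_top hnegv_ne hvD_le) hstrict
  -- the scaling factor
  have hnegw_ne : logIntNeg Ω ω w ≠ ⊤ := ne_top_of_lt hkeyneg
  have hposw_ne : logIntPos Ω ω w ≠ ⊤ := by rw [hpos_w_eq]; exact hposv_ne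
  set τ := (logIntPos Ω ω w).toReal - (logIntNeg Ω ω w).toReal with hτdef
  have hτpos : 0 < τ := by
    have h1 : (logIntNeg Ω ω w).toReal < (logIntNeg Ω ω v).toReal :=
      (ENNReal.toReal_lt_toReal (ne_top_of_lt hkeyneg) hnegv_ne).2 hkeyneg
    have h2 : (logIntPos Ω ω w).toReal = (logIntNeg Ω ω v).toReal := by
      rw [hpos_w_eq, hpv_eq]
    rw [hτdef, h2]; linarith
  have hccont : Continuous c := by
    apply Continuous.max _ continuous_const
    exact continuous_const.sub (continuous_const.mul
      ((continuous_id.dist continuous_const).rpow_const (fun x => Or.inr hs0.le)))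
  have hwcontΩ : ContinuousOn w Ω := ContinuousOn.sup hvcontΩ hccont.continuousOn
  have hωae : AEMeasurable ω (volume.restrict Ω) := hω_cont.aemeasurable hΩm
  have hwae : AEMeasurable w (volume.restrict Ω) := hwcontΩ.aemeasurable hΩm
  have hFw_meas : AEMeasurable (fun x => ω x * Real.log |w x|) (volume.restrict Ω) :=
    hωae.mul ((Real.measurable_log.comp measurable_abs).comp_aemeasurable hwae)
  have hωnn : ∀ x ∈ Ω, 0 ≤ ω x := fun x hx => (hω_pos x hx).le
  obtain ⟨hFw_int, hFw_val⟩ := value_bridge hΩm hωnn hw_ae hFw_meas hposw_ne hnegw_ne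
  set t := Real.exp (-τ) with htdef
  have ht0 : 0 < t := Real.exp_pos _
  have ht1 : t < 1 := by
    rw [htdef, show (1:ℝ) = Real.exp 0 from (Real.exp_zero).symm]
    exact Real.exp_lt_exp.2 (by linarith)
  set w' : Euc N → ℝ := fun x => t * w x with hw'def
  have hw'_ae : ∀ᵐ x ∂(volume.restrict Ω), w' x ≠ 0 := by
    filter_upwards [hw_ae] with x hx
    exact mul_ne_zero ht0.ne' hx
  have hF'_eq : (fun x => ω x * Real.log |w' x|)
      =ᵐ[volume.restrict Ω] fun x => Real.log t * ω x + ω x * Real.log |w x| := by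
    filter_upwards [hw_ae] with x hx
    rw [hw'def]; simp only
    rw [abs_mul, abs_of_pos ht0, Real.log_mul ht0.ne' (abs_ne_zero.2 hx)]
    ring
  have hG_int : Integrable (fun x => Real.log t * ω x + ω x * Real.log |w x|)
      (volume.restrict Ω) := (hω_int.const_mul _).add hFw_int
  have hF'_int : Integrable (fun x => ω x * Real.log |w' x|) (volume.restrict Ω) :=
    hG_int.congr hF'_eq.symm
  have hF'_val : ∫ x in Ω, ω x * Real.log |w' x| = 0 := by
    rw [integral_congr_ae hF'_eq, integral_add (hω_int.const_mul _) hFw_int,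
      integral_const_mul, hω_norm, hFw_val, ← hτdef, htdef, Real.log_exp]
    ring
  obtain ⟨hpos'_ne, hneg'_ne⟩ := finite_bridge hΩm hωnn hw'_ae hF'_int
  obtain ⟨_, hval'⟩ := value_bridge hΩm hωnn hw'_ae hF'_int.aemeasurable hpos'_ne hneg'_ne
  have hτ' : (logIntPos Ω ω w').toReal = (logIntNeg Ω ω w').toReal := by
    rw [hF'_val] at hval'; linarith
  have hk' : kval Ω ω w' = 1 := kval_eq_one_of hpos'_ne hneg'_ne hτ'
  -- w' is admissible with strictly smaller seminorm
  have hw'_bound : ∀ x ∈ closure Ω, ∀ y ∈ closure Ω,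
      |w' x - w' y| ≤ t * μ * dist x y ^ s := by
    intro x hx y hy
    rw [hw'def]; simp only
    rw [show t * w x - t * w y = t * (w x - w y) by ring, abs_mul, abs_of_pos ht0]
    calc t * |w x - w y| ≤ t * (μ * dist x y ^ s) :=
        mul_le_mul_of_nonneg_left (hw_holder x hx y hy) ht0.le
      _ = t * μ * dist x y ^ s := by ring
  have hw'_frontier : ∀ x ∈ frontier Ω, w' x = 0 := by
    intro x hx
    rw [hΩo.frontier_eq] at hx
    rw [hw'def]; simp only
    rw [hw_out x hx.2, mul_zero]
  have hw'Ms : MemMs s Ω ω w' := ⟨⟨⟨t * μ, hw'_bound⟩, hw'_frontier⟩, hk'⟩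
  have hsemi' : holderSemi s Ω w' ≤ t * μ := by
    apply Real.sSup_le
    · rintro q ⟨x, hx, y, hy, hxy, rfl⟩
      have hds : 0 < dist x y ^ s := Real.rpow_pos_of_pos (dist_pos.2 hxy) s
      rw [div_le_iff₀ hds]
      exact hw'_bound x hx y hy
    · positivity
  have hfinal : muS s Ω ω < muS s Ω ω := by
    calc muS s Ω ω ≤ holderSemi s Ω w' := muS_le_of_mem hw'Ms
      _ ≤ t * μ := hsemi'
      _ < 1 * μ := mul_lt_mul_of_pos_right ht1 hμpos
      _ = μ := one_mul μ
      _ = muS s Ω ω := hv_min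
  exact lt_irrefl _ hfinal

end AuxLemmas

/-- The unique nonnegative minimizer `v_s` of `|·|_s` on `M_s` is strictly
positive in `Ω`, and the only minimizers of `|·|_s` on `M_s` are `v_s` and `-v_s`. -/
theorem minimizers_are_plus_minus_vs
    (N : ℕ) (Ω : Set (Euc N)) (hΩo : IsOpen Ω) (hΩb : Bornology.IsBounded Ω)
    (hΩc : IsConnected Ω)
    (s : ℝ) (hs0 : 0 < s) (hs1 : s < 1)
    (ω : Euc N → ℝ) (hω_cont : ContinuousOn ω Ω) (hω_pos : ∀ x ∈ Ω, 0 < ω x)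
    (hω_Lr : ∃ r : ℝ, 1 < r ∧ MemLp ω (ENNReal.ofReal r) (volume.restrict Ω))
    (hω_norm : ∫ x in Ω, ω x = 1)
    (hK : ∃ ε > (0 : ℝ), Keps N Ω ω ε < ⊤)
    (v : Euc N → ℝ) (hv : MemMs s Ω ω v) (hv_nn : ∀ x, 0 ≤ v x)
    (hv0 : ∀ x ∉ Ω, v x = 0) (hv_min : holderSemi s Ω v = muS s Ω ω)
    (hv_unique : ∀ w : Euc N → ℝ, MemMs s Ω ω w → (∀ x, 0 ≤ w x) →
      (∀ x ∉ Ω, w x = 0) → holderSemi s Ω w = muS s Ω ω → w = v) :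
    (∀ x ∈ Ω, 0 < v x) ∧
    ∀ w : Euc N → ℝ, MemMs s Ω ω w → (∀ x ∉ Ω, w x = 0) →
      holderSemi s Ω w = muS s Ω ω →
      w = v ∨ w = fun x => -(v x) := by
  have hΩm : MeasurableSet Ω := hΩo.measurableSet
  haveI : IsFiniteMeasure (volume.restrict Ω) := ⟨by
    rw [Measure.restrict_apply_univ]; exact hΩb.measure_lt_top⟩
  obtain ⟨r, hr, hmem⟩ := hω_Lr
  have hω_int : Integrable ω (volume.restrict Ω) := hmem.integrable (by
    rw [show (1:ℝ≥0∞) = ENNReal.ofReal 1 from (ENNReal.ofReal_one).symm]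
    exact ENNReal.ofReal_le_ofReal hr.le)
  have hpos : ∀ x ∈ Ω, 0 < v x :=
    v_positive hΩo hΩb hΩc.nonempty hs0 hs1 hω_cont hω_pos hω_int hω_norm
      hv hv_nn hv0 hv_min
  refine ⟨hpos, ?_⟩
  intro w hw hw0 hwmin
  obtain ⟨Cw, hCw⟩ := hw.1.1
  have hwsemi := holder_le_semi hs0.ne' hw.1
  -- |w| is a nonnegative minimizer, hence equal to v
  have haC0 : MemC0Holder s Ω (fun x => |w x|) := by
    refine ⟨⟨Cw, fun x hx y hy => le_trans (abs_abs_sub_abs_le_abs_sub _ _) (hCw x hx y hy)⟩, ?_⟩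
    intro x hx
    show |w x| = 0
    rw [hw.1.2 x hx, abs_zero]
  have hka : kval Ω ω (fun x => |w x|) = kval Ω ω w := by
    have h1 : logIntPos Ω ω (fun x => |w x|) = logIntPos Ω ω w := by
      unfold logIntPos; simp_rw [abs_abs]
    have h2 : logIntNeg Ω ω (fun x => |w x|) = logIntNeg Ω ω w := by
      unfold logIntNeg; simp_rw [abs_abs, abs_eq_zero]
    rw [kval, kval, logInt, logInt, h1, h2]
  have haMs : MemMs s Ω ω (fun x => |w x|) := ⟨haC0, by rw [hka]; exact hw.2⟩
  have hasemi_le : holderSemi s Ω (fun x => |w x|) ≤ muS s Ω ω := by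
    rw [← hwmin]
    apply Real.sSup_le
    · rintro q ⟨x, hx, y, hy, hxy, rfl⟩
      have hds : 0 < dist x y ^ s := Real.rpow_pos_of_pos (dist_pos.2 hxy) s
      rw [div_le_iff₀ hds]
      exact le_trans (abs_abs_sub_abs_le_abs_sub _ _) (hwsemi x hx y hy)
    · rw [hwmin]
      rw [← hv_min]
      exact holderSemi_nonneg _ _ _
  have haeq : (fun x => |w x|) = v :=
    hv_unique _ haMs (fun x => abs_nonneg _)
      (fun x hx => by rw [hw0 x hx, abs_zero])
      (le_antisymm hasemi_le (muS_le_of_mem haMs))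
  -- connectedness: w has a constant sign on Ω
  have hwcont : ContinuousOn w Ω := (continuousOn_of_holder hs0 hCw).mono subset_closure
  have hPopen : IsOpen (Ω ∩ w ⁻¹' (Set.Ioi 0)) :=
    hwcont.isOpen_inter_preimage hΩo isOpen_Ioi
  have hNopen : IsOpen (Ω ∩ w ⁻¹' (Set.Iio 0)) :=
    hwcont.isOpen_inter_preimage hΩo isOpen_Iio
  have hdisj : Disjoint (Ω ∩ w ⁻¹' (Set.Ioi 0)) (Ω ∩ w ⁻¹' (Set.Iio 0)) := by
    rw [Set.disjoint_left]
    rintro x ⟨-, hx1⟩ ⟨-, hx2⟩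
    have h1 : 0 < w x := hx1
    have h2 : w x < 0 := hx2
    linarith
  have hcover : Ω ⊆ (Ω ∩ w ⁻¹' (Set.Ioi 0)) ∪ (Ω ∩ w ⁻¹' (Set.Iio 0)) := by
    intro x hx
    have hvx : 0 < v x := hpos x hx
    have hax : |w x| = v x := congrFun haeq x
    rcases lt_trichotomy (w x) 0 with hlt | heq | hgt
    · exact Or.inr ⟨hx, hlt⟩
    · rw [heq, abs_zero] at hax; linarith
    · exact Or.inl ⟨hx, hgt⟩
  rcases hΩc.isPreconnected.subset_or_subset hPopen hNopen hdisj hcover with hsub | hsub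
  · left
    funext x
    by_cases hx : x ∈ Ω
    · have hgt : 0 < w x := (hsub hx).2
      have hax : |w x| = v x := congrFun haeq x
      rwa [abs_of_pos hgt] at hax
    · rw [hw0 x hx, hv0 x hx]
  · right
    funext x
    by_cases hx : x ∈ Ω
    · have hlt : w x < 0 := (hsub hx).2
      have hax : |w x| = v x := congrFun haeq x
      rw [abs_of_neg hlt] at hax
      linarith
    · rw [hw0 x hx, hv0 x hx, neg_zero]
end
end
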